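/- arXiv:1409.1331 — 8 statements merged into one kernel-verified Lean document; each statement's English description precedes it below -/
import Mathlib

section
/- Let τ > 0. Define f(x) = x (log x)², h(x) = x log x − x + 1, and φ(x) = eˣ − x − 1. Then for every real x with 0 < x < e^τ, one has f(x) ≤ (τ² / φ(−τ)) · h(x), i.e. x (log x)² ≤ (τ² / (e^{−τ} + τ − 1)) · (x log x − x + 1). -/
open Real

-- e^s - s - 1 ≥ s²/2 for s ≥ 0
lemma aux1 (s : ℝ) (hs : 0 ≤ s) : s^2/2 ≤ Real.exp s - s - 1 := by
  have hmono : Monotone (fun s => Real.exp s - s - 1 - s^2/2) := by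
    apply monotone_of_deriv_nonneg
    · fun_prop
    · intro y
      have h : HasDerivAt (fun s => Real.exp s - s - 1 - s^2/2)
          (Real.exp y - 1 - 0 - (2*y^(2-1))/2) y := by
        exact (((Real.hasDerivAt_exp y).sub (hasDerivAt_id y)).sub (hasDerivAt_const y 1)).sub
          (((hasDerivAt_pow 2 y).div_const 2))
      rw [h.deriv]; norm_num
      have := Real.add_one_le_exp y

      linarith
  have h0 := hmono hs
  simp only [Real.exp_zero] at h0
  norm_num at h0
  linarith

-- e^{-s} + s - 1 ≤ s²/2 for s ≥ 0
lemma aux2 (s : ℝ) (hs : 0 ≤ s) : Real.exp (-s) + s - 1 ≤ s^2/2 := by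
  have hmono : Monotone (fun s => s^2/2 - (Real.exp (-s) + s - 1)) := by
    apply monotone_of_deriv_nonneg
    · fun_prop
    · intro y
      have h : HasDerivAt (fun s : ℝ => s^2/2 - (Real.exp (-s) + s - 1))
          ((2*y^(2-1))/2 - (Real.exp (-y) * (-1) + 1 - 0)) y := by
        exact ((hasDerivAt_pow 2 y).div_const 2).sub
          ((((hasDerivAt_neg y).exp).add (hasDerivAt_id y)).sub (hasDerivAt_const y 1))
      rw [h.deriv]
      have := Real.add_one_le_exp (-y)
      norm_num
      linarith
  have h0 := hmono hs
  simp only at h0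
  norm_num at h0
  linarith

-- (2+t)e^{-t} + t - 2 ≥ 0 for t ≥ 0
lemma aux3 (t : ℝ) (ht : 0 ≤ t) : 0 ≤ (2+t) * Real.exp (-t) + t - 2 := by
  have hmono : Monotone (fun t : ℝ => (2+t) * Real.exp (-t) + t - 2) := by
    apply monotone_of_deriv_nonneg
    · fun_prop
    · intro y
      have h : HasDerivAt (fun t : ℝ => (2+t) * Real.exp (-t) + t - 2)
          (((0+1) * Real.exp (-y) + (2+y) * (Real.exp (-y) * (-1))) + 1 - 0) y := by
        exact ((((hasDerivAt_const y 2).add (hasDerivAt_id y)).mul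
          ((hasDerivAt_neg y).exp)).add (hasDerivAt_id y)).sub (hasDerivAt_const y 2)
      rw [h.deriv]
      have h1 : (1 + y) * Real.exp (-y) ≤ 1 := by
        have := Real.add_one_le_exp y
        have hpos := Real.exp_pos (-y)
        calc (1+y) * Real.exp (-y) ≤ Real.exp y * Real.exp (-y) := by
              apply mul_le_mul_of_nonneg_right (by linarith) hpos.le
          _ = 1 := by rw [← Real.exp_add]; simp
      nlinarith [Real.exp_pos (-y)]
  have h0 := hmono ht
  simp only at h0
  norm_num at h0
  linarith

lemma qanti : AntitoneOn (fun t : ℝ => (Real.exp (-t) + t - 1) / t^2) (Set.Ioi 0) := by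
  apply antitoneOn_of_deriv_nonpos (convex_Ioi 0)
  · apply ContinuousOn.div
    · fun_prop
    · fun_prop
    · intro t ht
      exact pow_ne_zero 2 (ne_of_gt ht)
  · apply DifferentiableOn.div
    · fun_prop
    · fun_prop
    · intro t ht
      rw [interior_Ioi] at ht
      exact pow_ne_zero 2 (ne_of_gt ht)
  · intro t ht
    rw [interior_Ioi] at ht
    have ht0 : (0:ℝ) < t := ht
    have hnum : HasDerivAt (fun t : ℝ => Real.exp (-t) + t - 1)
        (Real.exp (-t) * (-1) + 1 - 0) t :=
      (((hasDerivAt_neg t).exp).add (hasDerivAt_id t)).sub (hasDerivAt_const t 1)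
    have hden : HasDerivAt (fun t : ℝ => t^2) (2*t^(2-1)) t := by
      simpa using hasDerivAt_pow 2 t
    have h : HasDerivAt (fun t : ℝ => (Real.exp (-t) + t - 1) / t^2)
        (((Real.exp (-t) * (-1) + 1 - 0) * t^2 - (Real.exp (-t) + t - 1) * (2*t^(2-1))) / (t^2)^2)
        t := hnum.div hden (pow_ne_zero 2 (ne_of_gt ht0))
    rw [h.deriv]
    apply div_nonpos_of_nonpos_of_nonneg _ (by positivity)
    have hu := aux3 t ht0.le
    have : (Real.exp (-t) * (-1) + 1 - 0) * t^2 - (Real.exp (-t) + t - 1) * (2*t^(2-1))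
        = -t * ((2+t) * Real.exp (-t) + t - 2) := by ring
    rw [this]
    have : 0 ≤ t * ((2+t) * Real.exp (-t) + t - 2) := mul_nonneg ht0.le hu
    linarith

-- key two-point inequality
lemma key (τ t : ℝ) (hτ : 0 < τ) (ht : t ≤ τ) :
    t^2 * (Real.exp (-τ) + τ - 1) ≤ τ^2 * (Real.exp (-t) + t - 1) := by
  rcases le_or_gt t 0 with h | h
  · have h1 : t^2/2 ≤ Real.exp (-t) + (-t) - 1 - ((-t)^2/2) + (-t)^2/2 + t - 1 + 1 - (-t) + (-t)^2/2 - t^2/2 + t^2/2 := by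
      nlinarith [aux1 (-t) (by linarith : (0:ℝ) ≤ -t)]
    have hlow : t^2/2 ≤ Real.exp (-t) + t - 1 := by
      nlinarith [aux1 (-t) (by linarith : (0:ℝ) ≤ -t)]
    have hup : Real.exp (-τ) + τ - 1 ≤ τ^2/2 := aux2 τ hτ.le
    have hA : 0 ≤ Real.exp (-τ) + τ - 1 := by
      have := Real.add_one_le_exp (-τ)
      linarith
    nlinarith [sq_nonneg t, sq_nonneg τ]
  · have hq := qanti (Set.mem_Ioi.mpr h) (Set.mem_Ioi.mpr hτ) ht
    simp only at hq
    have ht2 : (0:ℝ) < t^2 := by positivity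
    have hτ2 : (0:ℝ) < τ^2 := by positivity
    rw [div_le_div_iff₀ hτ2 ht2] at hq
    nlinarith

/-- For `τ > 0` and `0 < x < e^τ`, one has
`x (log x)² ≤ (τ² / (e^{-τ} + τ - 1)) · (x log x - x + 1)`. -/
theorem stmt_0 (τ : ℝ) (hτ : 0 < τ) (x : ℝ) (hx0 : 0 < x) (hx1 : x < Real.exp τ) :
    x * (Real.log x) ^ 2 ≤
      τ ^ 2 / (Real.exp (-τ) + τ - 1) * (x * Real.log x - x + 1) := by
  set t := Real.log x with htdef
  have hx : Real.exp t = x := Real.exp_log hx0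
  have htτ : t ≤ τ := by
    have : t < τ := (Real.log_lt_iff_lt_exp hx0).mpr hx1
    exact this.le
  have hA : 0 < Real.exp (-τ) + τ - 1 := by
    have := Real.add_one_lt_exp (by linarith : (-τ : ℝ) ≠ 0)
    linarith
  have hkey := key τ t hτ htτ
  rw [div_mul_eq_mul_div, le_div_iff₀ hA]
  have hexp : Real.exp t * Real.exp (-t) = 1 := by rw [← Real.exp_add]; simp
  have hmul := mul_le_mul_of_nonneg_left hkey (Real.exp_pos t).le
  calc x * t^2 * (Real.exp (-τ) + τ - 1)
      = Real.exp t * (t^2 * (Real.exp (-τ) + τ - 1)) := by rw [hx]; ring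
    _ ≤ Real.exp t * (τ^2 * (Real.exp (-t) + t - 1)) := hmul
    _ = τ^2 * (Real.exp t * Real.exp (-t) + t * Real.exp t - Real.exp t) := by ring
    _ = τ^2 * (x * t - x + 1) := by rw [hexp, hx]; ring
end

section
/- The function ψ : ℝ → ℝ defined by ψ(y) = (e^y − y − 1)/y² for y ≠ 0 and ψ(0) = 1/2 is non-decreasing on ℝ. -/
open intervalIntegral

/-- The continuous extension of `y ↦ (e^y - y - 1) / y²`. -/
noncomputable def psiExt (y : ℝ) : ℝ :=
  if y = 0 then 1 / 2 else (Real.exp y - y - 1) / y ^ 2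

lemma psiExt_intble (y : ℝ) :
    IntervalIntegrable (fun t => (1 - t) * Real.exp (t * y)) MeasureTheory.volume 0 1 :=
  (Continuous.intervalIntegrable (by continuity)) _ _

lemma psiExt_eq_integral (y : ℝ) :
    psiExt y = ∫ t in (0:ℝ)..1, (1 - t) * Real.exp (t * y) := by
  by_cases hy : y = 0
  · subst hy
    simp only [psiExt, if_pos rfl, mul_zero, Real.exp_zero, mul_one]
    rw [intervalIntegral.integral_sub intervalIntegrable_const
      (Continuous.intervalIntegrable (by continuity) _ _)]
    have : (∫ t in (0:ℝ)..1, t) = 1/2 := by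
      rw [integral_id]; norm_num
    simp [this]
    norm_num
  · have key : ∀ t ∈ Set.uIcc (0:ℝ) 1,
        HasDerivAt (fun t => ((1 - t)/y + 1/y^2) * Real.exp (t*y))
          ((1 - t) * Real.exp (t*y)) t := by
      intro t _
      have h1 : HasDerivAt (fun t : ℝ => (1 - t)/y + 1/y^2) (-1/y) t := by
        have := (((hasDerivAt_id t).const_sub 1).div_const y).add_const (1/y^2)
        simpa using this
      have h2 : HasDerivAt (fun t : ℝ => Real.exp (t*y)) (Real.exp (t*y) * y) t := by
        have := (Real.hasDerivAt_exp (t*y)).comp t ((hasDerivAt_id t).mul_const y)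
        exact this.congr_deriv (by ring)
      have := h1.mul h2
      refine this.congr_deriv ?_
      field_simp
      ring
    rw [intervalIntegral.integral_eq_sub_of_hasDerivAt key (psiExt_intble y)]
    simp only [psiExt, if_neg hy]
    field_simp
    simp only [mul_zero, Real.exp_zero]; ring

/-- The function `ψ(y) = (e^y − y − 1)/y²` (with `ψ(0) = 1/2`) is non-decreasing on `ℝ`. -/
theorem stmt_1 : Monotone psiExt := by
  intro a b hab
  rw [psiExt_eq_integral, psiExt_eq_integral]
  apply intervalIntegral.integral_mono_on (by norm_num) (psiExt_intble a) (psiExt_intble b)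
  intro t ht
  have ht0 : (0:ℝ) ≤ t := ht.1
  have ht1 : t ≤ 1 := ht.2
  have h : t * a ≤ t * b := mul_le_mul_of_nonneg_left hab ht0
  exact mul_le_mul_of_nonneg_left (Real.exp_le_exp.2 h) (by linarith)
end

section
/- Let n ≥ 1 and let, for each i ∈ {1,…,n}, s_i and t_i be probability density functions on ℝ^q with respect to the Lebesgue measure (measurable, nonnegative, integrating to 1). Assume there is τ > 0 such that s_i(y) ≤ e^τ t_i(y) for almost every y and every i. Then (1/n) Σ_{i=1}^n ∫_{ℝ^q} (log(s_i(y)/t_i(y)))² s_i(y) dy ≤ (τ² / (e^{−τ} + τ − 1)) · (1/n) Σ_{i=1}^n ∫_{ℝ^q} log(s_i(y)/t_i(y)) s_i(y) dy. -/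
open MeasureTheory Real


noncomputable def Gfun (x : ℝ) : ℝ := ∫ t in (0:ℝ)..1, (1 - t) * Real.exp (t * x)

lemma Gfun_spec (x : ℝ) : x ^ 2 * Gfun x = Real.exp x - x - 1 := by
  rcases eq_or_ne x 0 with h | h
  · simp [h]
  · have hderiv : ∀ u ∈ Set.uIcc (0:ℝ) 1,
        HasDerivAt (fun u : ℝ => Real.exp (u * x) * ((1 - u) / x + 1 / x ^ 2))
          ((1 - u) * Real.exp (u * x)) u := by
      intro u _
      have h1 : HasDerivAt (fun u : ℝ => Real.exp (u * x)) (Real.exp (u * x) * x) u := by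
        have := (hasDerivAt_id u).mul_const x
        simpa using this.exp
      have h2 : HasDerivAt (fun u : ℝ => (1 - u) / x + 1 / x ^ 2) ((0 - 1) / x) u :=
        (((hasDerivAt_const u (1:ℝ)).sub (hasDerivAt_id u)).div_const x).add_const (1 / x ^ 2)
      have := h1.mul h2
      refine this.congr_deriv ?_
      have h3 : x * (1 / x ^ 2) = 1 / x := by field_simp
      have h4 : x * ((1 - u) / x) = 1 - u := by field_simp
      linear_combination (Real.exp (u * x)) * (h4 + h3)
    have hint : IntervalIntegrable (fun u : ℝ => (1 - u) * Real.exp (u * x))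
        MeasureTheory.volume 0 1 := by
      apply Continuous.intervalIntegrable
      continuity
    have := intervalIntegral.integral_eq_sub_of_hasDerivAt hderiv hint
    rw [Gfun, this]
    field_simp
    simp only [mul_zero, Real.exp_zero]
    ring

lemma Gfun_mono : Monotone Gfun := by
  intro x y hxy
  apply intervalIntegral.integral_mono_on (by norm_num)
  · apply Continuous.intervalIntegrable; continuity
  · apply Continuous.intervalIntegrable; continuity
  · intro u hu
    have h1 : 0 ≤ 1 - u := by linarith [hu.2]
    have h2 : u * x ≤ u * y := mul_le_mul_of_nonneg_left hxy hu.1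
    exact mul_le_mul_of_nonneg_left (Real.exp_le_exp.2 h2) h1

lemma key_ineq (τ u : ℝ) (hu : u ≤ τ) :
    u ^ 2 * (Real.exp (-τ) + τ - 1) ≤ τ ^ 2 * (Real.exp (-u) + u - 1) := by
  have h1 : Real.exp (-τ) + τ - 1 = τ ^ 2 * Gfun (-τ) := by
    have := Gfun_spec (-τ); rw [neg_pow] at this; linarith
  have h2 : Real.exp (-u) + u - 1 = u ^ 2 * Gfun (-u) := by
    have := Gfun_spec (-u); rw [neg_pow] at this; linarith
  rw [h1, h2]
  have hG : Gfun (-τ) ≤ Gfun (-u) := Gfun_mono (neg_le_neg hu)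
  have : 0 ≤ u ^ 2 * τ ^ 2 := by positivity
  nlinarith

lemma psi_pos {τ : ℝ} (hτ : 0 < τ) : 0 < Real.exp (-τ) + τ - 1 := by
  have := Real.add_one_lt_exp (x := -τ) (by linarith)
  linarith

/-- Averaged second-moment bound for log-likelihood ratios: if for each `i`,
`s i` and `t i` are probability densities on `ℝ^q` with `s i ≤ e^τ t i` a.e., then
`(1/n) Σᵢ ∫ (log(sᵢ/tᵢ))² sᵢ ≤ (τ²/(e^{-τ}+τ-1)) · (1/n) Σᵢ ∫ log(sᵢ/tᵢ) sᵢ`. -/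
theorem stmt_2 (q n : ℕ) (hn : 1 ≤ n) (τ : ℝ) (hτ : 0 < τ)
    (s t : Fin n → (Fin q → ℝ) → ℝ)
    (hs_meas : ∀ i, Measurable (s i)) (ht_meas : ∀ i, Measurable (t i))
    (hs_nonneg : ∀ i y, 0 ≤ s i y) (ht_nonneg : ∀ i y, 0 ≤ t i y)
    (hs_one : ∀ i, ∫ y, s i y = 1) (ht_one : ∀ i, ∫ y, t i y = 1)
    (hbound : ∀ i, ∀ᵐ y : Fin q → ℝ, s i y ≤ Real.exp τ * t i y)
    (hint_sq : ∀ i, Integrable (fun y => (Real.log (s i y / t i y)) ^ 2 * s i y))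
    (hint_kl : ∀ i, Integrable (fun y => Real.log (s i y / t i y) * s i y)) :
    (1 / n : ℝ) * ∑ i, ∫ y, (Real.log (s i y / t i y)) ^ 2 * s i y ≤
      τ ^ 2 / (Real.exp (-τ) + τ - 1) *
        ((1 / n : ℝ) * ∑ i, ∫ y, Real.log (s i y / t i y) * s i y) := by
  have hψ : 0 < Real.exp (-τ) + τ - 1 := psi_pos hτ
  set ψ : ℝ := Real.exp (-τ) + τ - 1 with hψdef
  have hs_int : ∀ i, Integrable (s i) := by
    intro i
    by_contra h
    have h1 := hs_one i
    rw [integral_undef h] at h1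
    norm_num at h1
  have ht_int : ∀ i, Integrable (t i) := by
    intro i
    by_contra h
    have h1 := ht_one i
    rw [integral_undef h] at h1
    norm_num at h1
  -- per-index inequality
  have main : ∀ i, ∫ y, (Real.log (s i y / t i y)) ^ 2 * s i y ≤
      τ ^ 2 / ψ * ∫ y, Real.log (s i y / t i y) * s i y := by
    intro i
    set KL : ℝ := ∫ y, Real.log (s i y / t i y) * s i y with hKL
    -- dominating function
    have hint_h : Integrable
        (fun y => τ ^ 2 * (t i y + (Real.log (s i y / t i y) - 1) * s i y)) := by
      have : Integrable (fun y => t i y + (Real.log (s i y / t i y) * s i y - s i y)) :=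
        (ht_int i).add ((hint_kl i).sub (hs_int i))
      have h2 := this.const_mul (τ ^ 2)
      refine h2.congr (Filter.Eventually.of_forall fun y => ?_)
      ring
    have hint_l : Integrable (fun y => ψ * ((Real.log (s i y / t i y)) ^ 2 * s i y)) :=
      (hint_sq i).const_mul ψ
    -- pointwise a.e. bound
    have hae : ∀ᵐ y : Fin q → ℝ,
        ψ * ((Real.log (s i y / t i y)) ^ 2 * s i y) ≤
          τ ^ 2 * (t i y + (Real.log (s i y / t i y) - 1) * s i y) := by
      filter_upwards [hbound i] with y hy
      have ha := hs_nonneg i y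
      have hb := ht_nonneg i y
      rcases ha.eq_or_lt with ha0 | ha0
      · rw [← ha0]
        have : (0:ℝ) ≤ τ ^ 2 * t i y := by positivity
        simpa using this
      · have hb0 : 0 < t i y := by
          rcases hb.eq_or_lt with hb0 | hb0
          · exfalso
            rw [← hb0, mul_zero] at hy
            linarith
          · exact hb0
        set u : ℝ := Real.log (s i y / t i y) with hu
        have hrpos : 0 < s i y / t i y := div_pos ha0 hb0
        have hule : u ≤ τ := by
          have h1 : s i y / t i y ≤ Real.exp τ := (div_le_iff₀ hb0).2 (by linarith [hy])
          calc u ≤ Real.log (Real.exp τ) := Real.log_le_log hrpos h1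
            _ = τ := Real.log_exp τ
        have hexp : Real.exp (-u) * s i y = t i y := by
          rw [hu, ← Real.log_inv, Real.exp_log (by positivity)]
          field_simp
        have hk := key_ineq τ u hule
        have h3 := mul_le_mul_of_nonneg_right hk ha0.le
        calc ψ * (u ^ 2 * s i y) = u ^ 2 * (Real.exp (-τ) + τ - 1) * s i y := by
              rw [hψdef]; ring
          _ ≤ τ ^ 2 * (Real.exp (-u) + u - 1) * s i y := h3
          _ = τ ^ 2 * (Real.exp (-u) * s i y + (u - 1) * s i y) := by ring
          _ = τ ^ 2 * (t i y + (u - 1) * s i y) := by rw [hexp]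
    have hmono := integral_mono_ae hint_l hint_h hae
    have hl : ∫ y, ψ * ((Real.log (s i y / t i y)) ^ 2 * s i y)
        = ψ * ∫ y, (Real.log (s i y / t i y)) ^ 2 * s i y := integral_const_mul _ _
    have hr : ∫ y, τ ^ 2 * (t i y + (Real.log (s i y / t i y) - 1) * s i y)
        = τ ^ 2 * KL := by
      have he : (fun y => τ ^ 2 * (t i y + (Real.log (s i y / t i y) - 1) * s i y))
          = fun y => τ ^ 2 * (t i y + (Real.log (s i y / t i y) * s i y - s i y)) := by
        funext y; ring
      have hi2 : Integrable (fun y => Real.log (s i y / t i y) * s i y - s i y) :=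
        (hint_kl i).sub (hs_int i)
      rw [he, integral_const_mul, integral_add (ht_int i) hi2,
        integral_sub (hint_kl i) (hs_int i), ht_one i, hs_one i, ← hKL]
      ring
    rw [hl, hr] at hmono
    rw [div_mul_eq_mul_div, le_div_iff₀ hψ]
    linarith
  calc (1 / n : ℝ) * ∑ i, ∫ y, (Real.log (s i y / t i y)) ^ 2 * s i y
      ≤ (1 / n : ℝ) * ∑ i, τ ^ 2 / ψ * ∫ y, Real.log (s i y / t i y) * s i y := by
        apply mul_le_mul_of_nonneg_left (Finset.sum_le_sum fun i _ => main i)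
        positivity
    _ = τ ^ 2 / ψ * ((1 / n : ℝ) * ∑ i, ∫ y, Real.log (s i y / t i y) * s i y) := by
        rw [← Finset.mul_sum, mul_left_comm]
end

section
/- Let s and t be probability density functions on ℝ^q with respect to the Lebesgue measure, and let τ > 0 be such that s(y) ≤ e^τ t(y) for almost every y. Then for every integer k ≥ 3, ∫_{ℝ^q} (max(log(s(y)/t(y)), 0))^k s(y) dy ≤ τ^{k−2} · (τ² / (e^{−τ} + τ − 1)) · ∫_{ℝ^q} log(s(y)/t(y)) s(y) dy. -/
open MeasureTheory Real

lemma phi_nonpos {x : ℝ} (hx : 0 ≤ x) : 2 - x - (x + 2) * Real.exp (-x) ≤ 0 := by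
  set φ : ℝ → ℝ := fun x => 2 - x - (x + 2) * Real.exp (-x) with hφ
  have hderiv : ∀ y : ℝ, HasDerivAt φ (-1 + (y + 1) * Real.exp (-y)) y := by
    intro y
    have h1 : HasDerivAt (fun x : ℝ => Real.exp (-x)) (-Real.exp (-y)) y := by
      simpa [Function.comp_def] using (Real.hasDerivAt_exp (-y)).comp y (hasDerivAt_neg y)
    have h2 : HasDerivAt (fun x : ℝ => (x + 2) * Real.exp (-x))
        (1 * Real.exp (-y) + (y + 2) * (-Real.exp (-y))) y :=
      ((hasDerivAt_id y).add_const 2).mul h1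
    have h3 : HasDerivAt φ ((0 - 1) - (1 * Real.exp (-y) + (y + 2) * (-Real.exp (-y)))) y :=
      ((hasDerivAt_const y (2:ℝ)).sub (hasDerivAt_id y)).sub h2
    convert h3 using 1
    ring
  have hanti : AntitoneOn φ (Set.Ici (0:ℝ)) := by
    apply antitoneOn_of_deriv_nonpos (convex_Ici 0)
    · exact (by fun_prop : Continuous φ).continuousOn
    · intro y hy
      exact (hderiv y).differentiableAt.differentiableWithinAt
    · intro y hy
      rw [(hderiv y).deriv]
      have hy0 : 0 < y := by simpa using hy
      have h1 : (y + 1) * Real.exp (-y) ≤ 1 := by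
        rw [Real.exp_neg]
        rw [mul_inv_le_iff₀ (Real.exp_pos y)]
        simpa using Real.add_one_le_exp y
      linarith
  have h0 : φ 0 = 0 := by simp [hφ]
  have := hanti (Set.self_mem_Ici) (by exact hx) hx
  rw [h0] at this
  exact this

lemma sq_mul_le {a b : ℝ} (ha : 0 < a) (hab : a ≤ b) :
    a ^ 2 * (Real.exp (-b) + b - 1) ≤ b ^ 2 * (Real.exp (-a) + a - 1) := by
  set H : ℝ → ℝ := fun x => (Real.exp (-x) + x - 1) / x ^ 2 with hH
  have hderiv : ∀ y : ℝ, y ≠ 0 → HasDerivAt H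
      (((-Real.exp (-y) + 1) * y ^ 2 - (Real.exp (-y) + y - 1) * (2 * y)) / (y ^ 2) ^ 2) y := by
    intro y hy
    have h1 : HasDerivAt (fun x : ℝ => Real.exp (-x)) (-Real.exp (-y)) y := by
      simpa [Function.comp_def] using (Real.hasDerivAt_exp (-y)).comp y (hasDerivAt_neg y)
    have hnum : HasDerivAt (fun x : ℝ => Real.exp (-x) + x - 1) (-Real.exp (-y) + 1) y :=
      (h1.add (hasDerivAt_id y)).sub_const 1
    have hden : HasDerivAt (fun x : ℝ => x ^ 2) (2 * y) y := by
      simpa using hasDerivAt_pow 2 y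
    have := hnum.div hden (pow_ne_zero 2 hy)
    exact this
  have hanti : AntitoneOn H (Set.Icc a b) := by
    apply antitoneOn_of_deriv_nonpos (convex_Icc a b)
    · apply ContinuousOn.div
      · fun_prop
      · fun_prop
      · intro x hx
        exact pow_ne_zero 2 (ne_of_gt (lt_of_lt_of_le ha hx.1))
    · intro y hy
      rw [interior_Icc] at hy
      have hy0 : 0 < y := lt_trans ha hy.1
      exact (hderiv y (ne_of_gt hy0)).differentiableAt.differentiableWithinAt
    · intro y hy
      rw [interior_Icc] at hy
      have hy0 : 0 < y := lt_trans ha hy.1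
      rw [(hderiv y (ne_of_gt hy0)).deriv]
      apply div_nonpos_of_nonpos_of_nonneg
      · have hnum : (-Real.exp (-y) + 1) * y ^ 2 - (Real.exp (-y) + y - 1) * (2 * y)
            = y * (2 - y - (y + 2) * Real.exp (-y)) := by ring
        rw [hnum]
        exact mul_nonpos_of_nonneg_of_nonpos hy0.le (phi_nonpos hy0.le)
      · positivity
  have hb : 0 < b := lt_of_lt_of_le ha hab
  have := hanti (Set.left_mem_Icc.2 hab) (Set.right_mem_Icc.2 hab) hab
  rw [hH] at this
  simp only [div_le_div_iff₀ (pow_pos hb 2) (pow_pos ha 2)] at this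
  linarith

lemma key_pt {τ : ℝ} (hτ : 0 < τ) {k : ℕ} (hk : 3 ≤ k) {x : ℝ} (hx : x ≤ τ) :
    (max x 0) ^ k ≤ τ ^ (k - 2) * (τ ^ 2 / (Real.exp (-τ) + τ - 1)) * (Real.exp (-x) + x - 1) := by
  have hA : 0 < Real.exp (-τ) + τ - 1 := by
    have := Real.add_one_lt_exp (show (-τ) ≠ 0 by linarith)
    linarith
  have hex : 0 ≤ Real.exp (-x) + x - 1 := by
    have := Real.add_one_le_exp (-x)
    linarith
  have hC : 0 ≤ τ ^ (k - 2) * (τ ^ 2 / (Real.exp (-τ) + τ - 1)) := by positivity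
  rcases le_or_gt x 0 with h | h
  · rw [max_eq_right h, zero_pow (by omega)]
    exact mul_nonneg hC hex
  · rw [max_eq_left h.le]
    have h2 : x ^ 2 * (Real.exp (-τ) + τ - 1) ≤ τ ^ 2 * (Real.exp (-x) + x - 1) := sq_mul_le h hx
    have hxk : x ^ k = x ^ (k - 2) * x ^ 2 := by
      rw [← pow_add]
      congr 1
      omega
    have h3 : x ^ (k - 2) ≤ τ ^ (k - 2) := pow_le_pow_left₀ h.le hx _
    have h4 : x ^ 2 ≤ τ ^ 2 / (Real.exp (-τ) + τ - 1) * (Real.exp (-x) + x - 1) := by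
      rw [div_mul_eq_mul_div, le_div_iff₀ hA]
      linarith
    calc x ^ k = x ^ (k - 2) * x ^ 2 := hxk
      _ ≤ τ ^ (k - 2) * (τ ^ 2 / (Real.exp (-τ) + τ - 1) * (Real.exp (-x) + x - 1)) := by
          apply mul_le_mul h3 h4 (by positivity) (by positivity)
      _ = τ ^ (k - 2) * (τ ^ 2 / (Real.exp (-τ) + τ - 1)) * (Real.exp (-x) + x - 1) := by ring

/-- Moment bound: if `s, t` are probability densities on `ℝ^q` with `s ≤ e^τ t` a.e.,
then for every integer `k ≥ 3`,
`∫ (max(log(s/t),0))^k s ≤ τ^{k-2} (τ²/(e^{-τ}+τ-1)) ∫ log(s/t) s`. -/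
theorem stmt_3 (q : ℕ) (τ : ℝ) (hτ : 0 < τ)
    (s t : (Fin q → ℝ) → ℝ)
    (hs_meas : Measurable s) (ht_meas : Measurable t)
    (hs_nonneg : ∀ y, 0 ≤ s y) (ht_nonneg : ∀ y, 0 ≤ t y)
    (hs_one : ∫ y, s y = 1) (ht_one : ∫ y, t y = 1)
    (hbound : ∀ᵐ y : Fin q → ℝ, s y ≤ Real.exp τ * t y)
    (k : ℕ) (hk : 3 ≤ k)
    (hint_k : Integrable (fun y => (max (Real.log (s y / t y)) 0) ^ k * s y))
    (hint_kl : Integrable (fun y => Real.log (s y / t y) * s y)) :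
    ∫ y, (max (Real.log (s y / t y)) 0) ^ k * s y ≤
      τ ^ (k - 2) * (τ ^ 2 / (Real.exp (-τ) + τ - 1)) *
        ∫ y, Real.log (s y / t y) * s y := by
  have hA : 0 < Real.exp (-τ) + τ - 1 := by
    have := Real.add_one_lt_exp (show (-τ) ≠ 0 by linarith)
    linarith
  set C : ℝ := τ ^ (k - 2) * (τ ^ 2 / (Real.exp (-τ) + τ - 1)) with hCdef
  have hC : 0 ≤ C := by positivity
  have ht_int : Integrable t := by
    by_contra h
    rw [integral_undef h] at ht_one
    norm_num at ht_one
  have hs_int : Integrable s := by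
    by_contra h
    rw [integral_undef h] at hs_one
    norm_num at hs_one
  set g : (Fin q → ℝ) → ℝ := fun y => if s y = 0 then 0 else t y with hgdef
  have hg_meas : Measurable g :=
    Measurable.ite (hs_meas (measurableSet_singleton 0)) measurable_const ht_meas
  have hg_int : Integrable g := by
    apply ht_int.mono hg_meas.aestronglyMeasurable
    filter_upwards with y
    by_cases h : s y = 0 <;>
      simp [hgdef, h, Real.norm_eq_abs, abs_nonneg]
  have hg_le_t : ∀ y, g y ≤ t y := by
    intro y
    by_cases h : s y = 0 <;> simp [hgdef, h, ht_nonneg y]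
  have hg_le_one : ∫ y, g y ≤ 1 := ht_one ▸ integral_mono hg_int ht_int hg_le_t
  -- pointwise facts in the good set
  have hpos : ∀ y, s y ≤ Real.exp τ * t y → s y ≠ 0 → 0 < s y ∧ 0 < t y := by
    intro y hy h0
    have hs' : 0 < s y := (hs_nonneg y).lt_of_ne (Ne.symm h0)
    refine ⟨hs', ?_⟩
    rcases (ht_nonneg y).lt_or_eq with h | h
    · exact h
    · exfalso
      rw [← h, mul_zero] at hy
      linarith
  have ae1 : ∀ᵐ y : Fin q → ℝ, Real.exp (-(Real.log (s y / t y))) * s y = g y := by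
    filter_upwards [hbound] with y hy
    by_cases h0 : s y = 0
    · simp [hgdef, h0]
    · obtain ⟨hs', ht'⟩ := hpos y hy h0
      have hr : 0 < s y / t y := div_pos hs' ht'
      rw [Real.exp_neg, Real.exp_log hr]
      simp only [hgdef, h0, if_false]
      field_simp
  have ae2 : ∀ᵐ y : Fin q → ℝ,
      (max (Real.log (s y / t y)) 0) ^ k * s y ≤
        C * ((Real.exp (-(Real.log (s y / t y))) + Real.log (s y / t y) - 1) * s y) := by
    filter_upwards [hbound] with y hy
    by_cases h0 : s y = 0
    · simp [h0]
    · obtain ⟨hs', ht'⟩ := hpos y hy h0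
      have hr : 0 < s y / t y := div_pos hs' ht'
      have hle : Real.log (s y / t y) ≤ τ := by
        rw [Real.log_le_iff_le_exp hr]
        rw [div_le_iff₀ ht']
        linarith [hy]
      have := mul_le_mul_of_nonneg_right (key_pt hτ hk hle) (hs_nonneg y)
      calc (max (Real.log (s y / t y)) 0) ^ k * s y
          ≤ C * (Real.exp (-(Real.log (s y / t y))) + Real.log (s y / t y) - 1) * s y := this
        _ = C * ((Real.exp (-(Real.log (s y / t y))) + Real.log (s y / t y) - 1) * s y) := by
            ring
  set F : (Fin q → ℝ) → ℝ :=
    fun y => (Real.exp (-(Real.log (s y / t y))) + Real.log (s y / t y) - 1) * s y with hFdef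
  have aeF : (fun y => g y + Real.log (s y / t y) * s y - s y) =ᵐ[volume] F := by
    filter_upwards [ae1] with y hy
    simp only [hFdef]
    rw [← hy]
    ring
  have hsum : Integrable (fun y : Fin q → ℝ => g y + Real.log (s y / t y) * s y) :=
    hg_int.add hint_kl
  have hF_int : Integrable F := ((hsum.sub hs_int).congr aeF)
  have hF_val : ∫ y, F y = (∫ y, g y) + (∫ y, Real.log (s y / t y) * s y) - 1 := by
    rw [← integral_congr_ae aeF]
    rw [integral_sub hsum hs_int, hs_one, integral_add hg_int hint_kl]
  have hF_le : ∫ y, F y ≤ ∫ y, Real.log (s y / t y) * s y := by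
    rw [hF_val]
    linarith
  calc ∫ y, (max (Real.log (s y / t y)) 0) ^ k * s y
      ≤ ∫ y, C * F y := integral_mono_ae hint_k (hF_int.const_mul C) ae2
    _ = C * ∫ y, F y := integral_const_mul C F
    _ ≤ C * ∫ y, Real.log (s y / t y) * s y := mul_le_mul_of_nonneg_left hF_le hC
end

section
/- Let p, q ≥ 1 be integers and let D be an integer with D > q². For a pair (k, J) with k ∈ ℕ, k ≥ 1, and J a subset of {1,…,p} × {1,…,q}, set D(k,J) = k(|J| + q² + 1) − 1. Then the number of pairs (k, J) with D(k,J) = D is at most 2^{pq} if pq ≤ D − q², and at most (e·p·q/(D − q²))^{D − q²} if pq > D − q². -/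
/-- The dimension `D(k,J) = k(|J| + q² + 1) − 1` of the mixture model with `k`
components and relevant variable set `J ⊆ {1,…,p} × {1,…,q}`. -/
def modelDim (p q : ℕ) (k : ℕ) (J : Finset (Fin p × Fin q)) : ℕ :=
  k * (J.card + q ^ 2 + 1) - 1

lemma aux_mul_eq (p q D k : ℕ) (J : Finset (Fin p × Fin q)) (hk : 1 ≤ k)
    (h : modelDim p q k J = D) : k * (J.card + q ^ 2 + 1) = D + 1 := by
  unfold modelDim at h
  have hpos : 1 ≤ k * (J.card + q ^ 2 + 1) := Nat.one_le_iff_ne_zero.mpr (by positivity)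
  have := Nat.eq_add_of_sub_eq hpos h
  omega

lemma aux_inj (p q D : ℕ) :
    Function.Injective
      (fun x : {x : ℕ × Finset (Fin p × Fin q) // 1 ≤ x.1 ∧ modelDim p q x.1 x.2 = D} =>
        x.1.2) := by
  rintro ⟨⟨k1, J1⟩, hk1, h1⟩ ⟨⟨k2, J2⟩, hk2, h2⟩ h
  simp only at h
  subst h
  have e1 := aux_mul_eq p q D k1 J1 hk1 h1
  have e2 := aux_mul_eq p q D k2 J1 hk2 h2
  have hm : 0 < J1.card + q ^ 2 + 1 := by positivity
  have : k1 = k2 := Nat.eq_of_mul_eq_mul_right hm (e1.trans e2.symm)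
  simp [this]

lemma aux_card_le (p q D k : ℕ) (J : Finset (Fin p × Fin q)) (hk : 1 ≤ k)
    (h : modelDim p q k J = D) : J.card ≤ D - q ^ 2 := by
  have e := aux_mul_eq p q D k J hk h
  have hle : J.card + q ^ 2 + 1 ≤ k * (J.card + q ^ 2 + 1) :=
    Nat.le_mul_of_pos_left _ hk
  omega

lemma count_small (α : Type*) [Fintype α] [DecidableEq α] (d : ℕ) :
    Nat.card {J : Finset α // J.card ≤ d} ≤
      ∑ j ∈ Finset.range (d + 1), (Fintype.card α).choose j := by
  rw [Nat.card_eq_fintype_card, Fintype.card_subtype]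
  calc (Finset.univ.filter fun J : Finset α => J.card ≤ d).card
      ≤ ((Finset.range (d + 1)).biUnion fun j => Finset.powersetCard j Finset.univ).card := by
        apply Finset.card_le_card
        intro J hJ
        simp only [Finset.mem_filter] at hJ
        simp only [Finset.mem_biUnion, Finset.mem_range, Finset.mem_powersetCard_univ]
        exact ⟨J.card, by omega, rfl⟩
    _ ≤ ∑ j ∈ Finset.range (d + 1), (Finset.powersetCard j (Finset.univ : Finset α)).card :=
        Finset.card_biUnion_le
    _ = ∑ j ∈ Finset.range (d + 1), (Fintype.card α).choose j := by
        simp [Finset.card_powersetCard]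

lemma sum_choose_le (n d : ℕ) (hd : 0 < d) (hdn : d ≤ n) :
    (∑ j ∈ Finset.range (d + 1), ((n.choose j : ℝ))) ≤ (Real.exp 1 * n / d) ^ d := by
  have hn : 0 < n := lt_of_lt_of_le hd hdn
  set x : ℝ := (d : ℝ) / n with hxdef
  have hx0 : 0 < x := by positivity
  have hx1 : x ≤ 1 := by
    rw [hxdef, div_le_one (by positivity)]
    exact_mod_cast hdn
  set S : ℝ := ∑ j ∈ Finset.range (d + 1), ((n.choose j : ℝ)) with hS
  have h1 : x ^ d * S ≤ ∑ j ∈ Finset.range (d + 1), (n.choose j : ℝ) * x ^ j := by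
    rw [hS, Finset.mul_sum]
    apply Finset.sum_le_sum
    intro j hj
    have hjd : j ≤ d := by
      have := Finset.mem_range.mp hj; omega
    have hxd : x ^ d ≤ x ^ j := pow_le_pow_of_le_one hx0.le hx1 hjd
    calc x ^ d * (n.choose j : ℝ) = (n.choose j : ℝ) * x ^ d := by ring
      _ ≤ (n.choose j : ℝ) * x ^ j := by
          apply mul_le_mul_of_nonneg_left hxd (by positivity)
  have h2 : ∑ j ∈ Finset.range (d + 1), (n.choose j : ℝ) * x ^ j ≤
      ∑ j ∈ Finset.range (n + 1), (n.choose j : ℝ) * x ^ j := by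
    apply Finset.sum_le_sum_of_subset_of_nonneg
    · exact Finset.range_subset_range.mpr (by omega)
    · intro j _ _; positivity
  have h3 : ∑ j ∈ Finset.range (n + 1), (n.choose j : ℝ) * x ^ j = (1 + x) ^ n := by
    rw [add_comm (1 : ℝ) x, add_pow]
    apply Finset.sum_congr rfl
    intro j _
    simp [mul_comm]
  have h4 : (1 + x) ^ n ≤ Real.exp d := by
    have hle : 1 + x ≤ Real.exp x := by
      have := Real.add_one_le_exp x; linarith
    calc (1 + x) ^ n ≤ (Real.exp x) ^ n := pow_le_pow_left₀ (by positivity) hle n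
      _ = Real.exp (n * x) := (Real.exp_nat_mul x n).symm
      _ = Real.exp d := by
          congr 1
          rw [hxdef]
          field_simp
  have hkey : x ^ d * S ≤ Real.exp d := by
    calc x ^ d * S ≤ _ := h1
      _ ≤ _ := h2
      _ = (1 + x) ^ n := h3
      _ ≤ Real.exp d := h4
  have hSle : S ≤ Real.exp d / x ^ d := by
    rw [le_div_iff₀ (by positivity)]
    linarith [hkey]
  have heq : Real.exp d / x ^ d = (Real.exp 1 * n / d) ^ d := by
    have hexp : Real.exp (d : ℝ) = Real.exp 1 ^ d := by
      rw [← Real.exp_nat_mul]; norm_num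
    rw [hexp, ← div_pow]
    congr 1
    rw [hxdef]
    field_simp
  linarith [hSle, heq.le]

/-- The number of pairs `(k, J)` with `k ≥ 1` and `D(k,J) = D` is at most `2^{pq}`
when `pq ≤ D − q²`, and at most `(epq/(D−q²))^{D−q²}` when `pq > D − q²`. -/
theorem stmt_8 (p q D : ℕ) (hp : 1 ≤ p) (hq : 1 ≤ q) (hD : q ^ 2 < D) :
    (p * q ≤ D - q ^ 2 →
      Nat.card {x : ℕ × Finset (Fin p × Fin q) //
          1 ≤ x.1 ∧ modelDim p q x.1 x.2 = D} ≤ 2 ^ (p * q)) ∧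
    (D - q ^ 2 < p * q →
      (Nat.card {x : ℕ × Finset (Fin p × Fin q) //
          1 ≤ x.1 ∧ modelDim p q x.1 x.2 = D} : ℝ) ≤
        (Real.exp 1 * p * q / ((D - q ^ 2 : ℕ) : ℝ)) ^ (D - q ^ 2)) := by
  constructor
  · intro _
    have h := Nat.card_le_card_of_injective _ (aux_inj p q D)
    calc Nat.card {x : ℕ × Finset (Fin p × Fin q) //
          1 ≤ x.1 ∧ modelDim p q x.1 x.2 = D}
        ≤ Nat.card (Finset (Fin p × Fin q)) := h
      _ = 2 ^ (p * q) := by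
          rw [Nat.card_eq_fintype_card, Fintype.card_finset]
          simp
  · intro hlt
    set d := D - q ^ 2 with hd
    have hd0 : 0 < d := by omega
    have hdn : d ≤ p * q := le_of_lt hlt
    -- injection into subsets of card ≤ d
    have hinj : Function.Injective
        (fun x : {x : ℕ × Finset (Fin p × Fin q) // 1 ≤ x.1 ∧ modelDim p q x.1 x.2 = D} =>
          (⟨x.1.2, aux_card_le p q D x.1.1 x.1.2 x.2.1 x.2.2⟩ : {J : Finset (Fin p × Fin q) // J.card ≤ d})) := by
      intro a b hab
      exact aux_inj p q D (congrArg Subtype.val hab)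
    have h1 : Nat.card {x : ℕ × Finset (Fin p × Fin q) //
          1 ≤ x.1 ∧ modelDim p q x.1 x.2 = D} ≤
        Nat.card {J : Finset (Fin p × Fin q) // J.card ≤ d} :=
      Nat.card_le_card_of_injective _ hinj
    have h2 := count_small (Fin p × Fin q) d
    have hcard : Fintype.card (Fin p × Fin q) = p * q := by simp
    rw [hcard] at h2
    have h3 : (Nat.card {x : ℕ × Finset (Fin p × Fin q) //
          1 ≤ x.1 ∧ modelDim p q x.1 x.2 = D} : ℝ) ≤
        ∑ j ∈ Finset.range (d + 1), (((p * q).choose j : ℝ)) := by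
      push_cast
      exact_mod_cast le_trans h1 h2
    have h4 := sum_choose_le (p * q) d hd0 hdn
    have : (Real.exp 1 * ↑(p * q) / (d : ℝ)) ^ d =
        (Real.exp 1 * p * q / ((d : ℕ) : ℝ)) ^ d := by
      push_cast
      ring_nf
    linarith [h4, this.le, this.ge]
end

section
/- Let p, q ≥ 1 be integers. For a pair (k, J) with k ∈ ℕ, k ≥ 1, and J a subset of {1,…,p} × {1,…,q}, set D(k,J) = k(|J| + q² + 1) − 1 and, when D(k,J) > q², define the weight x(k,J) = D(k,J) · log( 4·e·p·q / min(D(k,J) − q², pq) ). Then Σ exp(−x(k,J)) ≤ 2, where the sum ranges over all pairs (k, J) with k ≥ 1 and J ⊆ {1,…,p} × {1,…,q} such that D(k,J) > q² (i.e. all pairs except (k,J) = (1, ∅)). -/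
open scoped ENNReal

/-- The weight `x(k,J) = D(k,J) log(4epq / ((D(k,J) − q²) ∧ pq))`. -/
noncomputable def weight (p q : ℕ) (k : ℕ) (J : Finset (Fin p × Fin q)) : ℝ :=
  (modelDim p q k J : ℝ) *
    Real.log (4 * Real.exp 1 * p * q / ((min (modelDim p q k J - q ^ 2) (p * q) : ℕ) : ℝ))

/-- Binomial bound in `ℕ`: a single term of the binomial expansion. -/
lemma nat_binom_term (n j m : ℕ) (hj : j ≤ n) :
    n.choose j * m ^ j * n ^ (n - j) ≤ (m + n) ^ n := by
  rw [add_pow]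
  calc n.choose j * m ^ j * n ^ (n - j)
      = m ^ j * n ^ (n - j) * n.choose j := by ring
    _ ≤ ∑ i ∈ Finset.range (n + 1), m ^ i * n ^ (n - i) * n.choose i :=
        Finset.single_le_sum (f := fun i => m ^ i * n ^ (n - i) * n.choose i)
          (fun i _ => Nat.zero_le _) (Finset.mem_range.mpr (Nat.lt_succ_of_le hj))

/-- `C(n,j) ≤ e^m (n/m)^j` for `1 ≤ m ≤ n`, `j ≤ n`. -/
lemma choose_le_exp (n j m : ℕ) (hm1 : 1 ≤ m) (hmn : m ≤ n) (hj : j ≤ n) :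
    (n.choose j : ℝ) ≤ Real.exp m * ((n : ℝ) / m) ^ j := by
  have hn1 : 1 ≤ n := hm1.trans hmn
  have hm0 : (0 : ℝ) < m := by exact_mod_cast hm1
  have hn0 : (0 : ℝ) < n := by exact_mod_cast hn1
  have h1 : (n.choose j : ℝ) * (m : ℝ) ^ j * (n : ℝ) ^ (n - j) ≤ ((m : ℝ) + n) ^ n := by
    have := nat_binom_term n j m hj
    exact_mod_cast this
  have h2 : ((m : ℝ) + n) ^ n ≤ (n : ℝ) ^ n * Real.exp m := by
    have hrw : (m : ℝ) + n = n * (1 + m / n) := by field_simp; ring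
    rw [hrw, mul_pow]
    refine mul_le_mul_of_nonneg_left ?_ (by positivity)
    calc (1 + (m : ℝ) / n) ^ n ≤ Real.exp ((m : ℝ) / n) ^ n := by
          apply pow_le_pow_left₀ (by positivity)
          linarith [Real.add_one_le_exp ((m : ℝ) / n)]
      _ = Real.exp m := by
          rw [← Real.exp_nat_mul]
          congr 1
          field_simp
  have hnn : (n : ℝ) ^ n = (n : ℝ) ^ j * (n : ℝ) ^ (n - j) := by
    rw [← pow_add]; congr 1; omega
  have h3 : (n.choose j : ℝ) * (m : ℝ) ^ j ≤ Real.exp m * (n : ℝ) ^ j := by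
    have hpos : (0 : ℝ) < (n : ℝ) ^ (n - j) := by positivity
    have : (n.choose j : ℝ) * (m : ℝ) ^ j * (n : ℝ) ^ (n - j) ≤
        Real.exp m * (n : ℝ) ^ j * (n : ℝ) ^ (n - j) := by
      calc (n.choose j : ℝ) * (m : ℝ) ^ j * (n : ℝ) ^ (n - j) ≤ ((m : ℝ) + n) ^ n := h1
        _ ≤ (n : ℝ) ^ n * Real.exp m := h2
        _ = Real.exp m * (n : ℝ) ^ j * (n : ℝ) ^ (n - j) := by rw [hnn]; ring
    exact le_of_mul_le_mul_right this hpos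
  rw [div_pow, ← mul_div_assoc, le_div_iff₀ (by positivity)]
  exact h3

/-- The key real inequality: `C(n,j) (m/(4en))^D ≤ (1/4)^D`. -/
lemma key_real (n j m D : ℕ) (hm1 : 1 ≤ m) (hmn : m ≤ n) (hjm : j ≤ m) (hmD : m ≤ D) :
    (n.choose j : ℝ) * ((m : ℝ) / (4 * Real.exp 1 * n)) ^ D ≤ (1 / 4 : ℝ) ^ D := by
  have hjn : j ≤ n := hjm.trans hmn
  have hjD : j ≤ D := hjm.trans hmD
  have hm0 : (0 : ℝ) < m := by exact_mod_cast hm1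
  have hn0 : (0 : ℝ) < n := by exact_mod_cast hm1.trans hmn
  have hbase : (1 : ℝ) ≤ (n : ℝ) / m := (one_le_div hm0).mpr (by exact_mod_cast hmn)
  have hchoose : (n.choose j : ℝ) ≤ (Real.exp 1 * ((n : ℝ) / m)) ^ D := by
    calc (n.choose j : ℝ) ≤ Real.exp m * ((n : ℝ) / m) ^ j := choose_le_exp n j m hm1 hmn hjn
      _ ≤ Real.exp D * ((n : ℝ) / m) ^ D := by
          apply mul_le_mul (Real.exp_le_exp.mpr (by exact_mod_cast hmD))
            (pow_le_pow_right₀ hbase hjD) (by positivity) (by positivity)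
      _ = (Real.exp 1 * ((n : ℝ) / m)) ^ D := by
          rw [mul_pow, ← Real.exp_nat_mul, mul_one]
  calc (n.choose j : ℝ) * ((m : ℝ) / (4 * Real.exp 1 * n)) ^ D
      ≤ (Real.exp 1 * ((n : ℝ) / m)) ^ D * ((m : ℝ) / (4 * Real.exp 1 * n)) ^ D :=
        mul_le_mul_of_nonneg_right hchoose (by positivity)
    _ = ((Real.exp 1 * ((n : ℝ) / m)) * ((m : ℝ) / (4 * Real.exp 1 * n))) ^ D :=
        (mul_pow _ _ _).symm
    _ = (1 / 4 : ℝ) ^ D := by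
        congr 1
        have he := Real.exp_ne_zero 1
        field_simp
  
/-- `exp(−(D log(A/m))) = (m/A)^D`. -/
lemma exp_neg_nat_mul_log (D : ℕ) (m A : ℝ) (hm : 0 < m) (hA : 0 < A) :
    Real.exp (-((D : ℝ) * Real.log (A / m))) = (m / A) ^ D := by
  rw [show -((D : ℝ) * Real.log (A / m)) = (D : ℝ) * Real.log (m / A) by
    rw [neg_mul_eq_mul_neg, ← Real.log_inv, inv_div]]
  rw [Real.exp_nat_mul, Real.exp_log (div_pos hm hA)]

lemma geo_quarter_le_two : ∑' j : ℕ, (4 : ℝ≥0∞)⁻¹ ^ j ≤ 2 := by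
  rw [ENNReal.tsum_geometric]
  rw [show (2 : ℝ≥0∞) = (2⁻¹)⁻¹ by simp]
  rw [ENNReal.inv_le_inv]
  calc (2 : ℝ≥0∞)⁻¹ = 1 - 2⁻¹ := ENNReal.one_sub_inv_two.symm
    _ ≤ 1 - 4⁻¹ := by
        apply tsub_le_tsub_left
        rw [ENNReal.inv_le_inv]
        norm_num

lemma tail_bound : ∑' k : ℕ, (if 1 ≤ k then 2 * (4 : ℝ≥0∞)⁻¹ ^ (2 * k - 1) else 0) ≤ 2 := by
  have h : ∀ k : ℕ, (if 1 ≤ k then 2 * (4 : ℝ≥0∞)⁻¹ ^ (2 * k - 1) else 0)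
      ≤ (2 : ℝ≥0∞)⁻¹ ^ k := by
    intro k
    by_cases hk : 1 ≤ k
    · rw [if_pos hk]
      have h4 : (4 : ℝ≥0∞)⁻¹ = (2 : ℝ≥0∞)⁻¹ ^ 2 := by
        rw [← ENNReal.inv_pow]; norm_num
      rw [h4, ← pow_mul]
      calc 2 * (2 : ℝ≥0∞)⁻¹ ^ (2 * (2 * k - 1))
          ≤ 2 * (2 : ℝ≥0∞)⁻¹ ^ (k + 1) :=
            mul_le_mul_right
              (pow_le_pow_right_of_le_one' (ENNReal.inv_le_one.mpr one_le_two) (by omega)) _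
        _ = (2 * 2⁻¹) * 2⁻¹ ^ k := by rw [pow_succ]; ring
        _ = 2⁻¹ ^ k := by
            rw [ENNReal.mul_inv_cancel (by norm_num) (by norm_num), one_mul]
    · rw [if_neg hk]; exact zero_le
  calc ∑' k : ℕ, (if 1 ≤ k then 2 * (4 : ℝ≥0∞)⁻¹ ^ (2 * k - 1) else 0)
      ≤ ∑' k : ℕ, (2 : ℝ≥0∞)⁻¹ ^ k := ENNReal.tsum_le_tsum h
    _ = 2 := by rw [ENNReal.tsum_geometric, ENNReal.one_sub_inv_two, inv_inv]

set_option maxHeartbeats 1000000 in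
/-- Kraft-type inequality: summing `e^{−x(k,J)}` over all pairs `(k,J)` with
`k ≥ 1` and `D(k,J) > q²` gives at most `2`. -/
theorem stmt_9 (p q : ℕ) (hp : 1 ≤ p) (hq : 1 ≤ q) :
    ∑' x : {x : ℕ × Finset (Fin p × Fin q) //
        1 ≤ x.1 ∧ q ^ 2 < modelDim p q x.1 x.2},
      ENNReal.ofReal (Real.exp (-(weight p q x.1.1 x.1.2))) ≤ 2 := by
  classical
  set n := p * q with hn
  have hn1 : 1 ≤ n := Nat.one_le_iff_ne_zero.mpr (Nat.mul_ne_zero (by omega) (by omega))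
  set f : ℕ × Finset (Fin p × Fin q) → ℝ≥0∞ :=
    fun x => ENNReal.ofReal (Real.exp (-(weight p q x.1 x.2))) with hf
  set S : Set (ℕ × Finset (Fin p × Fin q)) :=
    {x | 1 ≤ x.1 ∧ q ^ 2 < modelDim p q x.1 x.2} with hS
  -- the function of (k, card J) that the indicator equals
  set F : ℕ → ℕ → ℝ≥0∞ := fun k j =>
    if 1 ≤ k ∧ q ^ 2 < k * (j + q ^ 2 + 1) - 1 then
      ENNReal.ofReal (Real.exp (-(((k * (j + q ^ 2 + 1) - 1 : ℕ) : ℝ) *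
        Real.log (4 * Real.exp 1 * p * q /
          ((min (k * (j + q ^ 2 + 1) - 1 - q ^ 2) (p * q) : ℕ) : ℝ)))))
    else 0 with hF
  have hind : ∀ (k : ℕ) (J : Finset (Fin p × Fin q)),
      S.indicator f (k, J) = F k J.card := by
    intro k J
    rw [Set.indicator_apply]
    simp only [hS, Set.mem_setOf_eq, hf, hF, weight, modelDim]
  have hcard : (Finset.univ : Finset (Fin p × Fin q)).card = n := by
    simp [hn]
  -- key per (k, j) bound
  have hkey : ∀ k j, j ≤ n →
      (n.choose j : ℝ≥0∞) * F k j ≤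
        (if 1 ≤ k then (4 : ℝ≥0∞)⁻¹ ^ (2 * k - 1) * (4 : ℝ≥0∞)⁻¹ ^ j else 0) := by
    intro k j hj
    by_cases hc : 1 ≤ k ∧ q ^ 2 < k * (j + q ^ 2 + 1) - 1
    · obtain ⟨hk, hDq⟩ := hc
      rw [hF]
      simp only [if_pos (⟨hk, hDq⟩ : 1 ≤ k ∧ q ^ 2 < k * (j + q ^ 2 + 1) - 1), if_pos hk]
      have hq2 : 1 ≤ q ^ 2 := Nat.one_le_pow _ _ (by omega)
      have hmul1 : j + q ^ 2 + 1 ≤ k * (j + q ^ 2 + 1) := Nat.le_mul_of_pos_left _ (by omega)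
      have hkey2 : j + 2 * k ≤ k * (j + q ^ 2 + 1) := by
        calc j + 2 * k ≤ k * j + 2 * k := by
              have : j ≤ k * j := Nat.le_mul_of_pos_left _ (by omega)
              omega
          _ = k * (j + 2) := by ring
          _ ≤ k * (j + q ^ 2 + 1) := Nat.mul_le_mul_left k (by omega)
      set D : ℕ := k * (j + q ^ 2 + 1) - 1 with hD
      set m : ℕ := min (D - q ^ 2) (p * q) with hm
      have hmn' : m ≤ n := by rw [hm, hn]; exact min_le_right _ _
      have hm1 : 1 ≤ m := le_min (by omega) (by omega)
      have hjm : j ≤ m := le_min (by omega) hj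
      have hmD : m ≤ D := le_trans (min_le_left _ _) (by omega)
      have hD2 : 2 * k - 1 + j ≤ D := by omega
      have hm0 : (0 : ℝ) < (m : ℝ) := by exact_mod_cast hm1
      have hA : (0 : ℝ) < 4 * Real.exp 1 * p * q := by positivity
      have hApq : (4 * Real.exp 1 * (p : ℝ) * q) = 4 * Real.exp 1 * (n : ℝ) := by
        rw [hn]; push_cast; ring
      calc (n.choose j : ℝ≥0∞) *
            ENNReal.ofReal (Real.exp (-((D : ℝ) *
              Real.log (4 * Real.exp 1 * p * q / (m : ℝ)))))
          = ENNReal.ofReal ((n.choose j : ℝ) *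
              Real.exp (-((D : ℝ) * Real.log (4 * Real.exp 1 * p * q / (m : ℝ))))) := by
            rw [ENNReal.ofReal_mul (by positivity), ENNReal.ofReal_natCast]
        _ = ENNReal.ofReal ((n.choose j : ℝ) * ((m : ℝ) / (4 * Real.exp 1 * n)) ^ D) := by
            rw [exp_neg_nat_mul_log D _ _ hm0 hA, hApq]
        _ ≤ ENNReal.ofReal ((1 / 4 : ℝ) ^ D) :=
            ENNReal.ofReal_le_ofReal (key_real n j m D hm1 hmn' hjm hmD)
        _ = (4 : ℝ≥0∞)⁻¹ ^ D := by
            rw [ENNReal.ofReal_pow (by norm_num)]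
            congr 1
            rw [one_div, ENNReal.ofReal_inv_of_pos (by norm_num)]
            norm_num
        _ ≤ (4 : ℝ≥0∞)⁻¹ ^ (2 * k - 1 + j) := by
            apply pow_le_pow_right_of_le_one' (by simp [ENNReal.inv_le_one]) hD2
        _ = (4 : ℝ≥0∞)⁻¹ ^ (2 * k - 1) * (4 : ℝ≥0∞)⁻¹ ^ j := pow_add _ _ _
    · rw [hF]
      simp only [if_neg hc]
      rw [mul_zero]
      exact zero_le
  -- per-k bound for the inner sum
  have hksum : ∀ k, (∑' J : Finset (Fin p × Fin q), S.indicator f (k, J)) ≤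
      (if 1 ≤ k then 2 * (4 : ℝ≥0∞)⁻¹ ^ (2 * k - 1) else 0) := by
    intro k
    rw [tsum_fintype]
    have step1 : ∑ J : Finset (Fin p × Fin q), S.indicator f (k, J)
        = ∑ j ∈ Finset.range (n + 1), (n.choose j : ℝ≥0∞) * F k j := by
      rw [Finset.sum_congr rfl (fun J _ => hind k J)]
      rw [← Finset.powerset_univ, Finset.powerset_card_disjiUnion]
      erw [Finset.sum_disjiUnion]
      rw [hcard]
      refine Finset.sum_congr rfl fun j hj => ?_
      rw [Finset.sum_congr rfl (fun J hJ => by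
            rw [(Finset.mem_powersetCard.mp hJ).2]),
          Finset.sum_const, Finset.card_powersetCard, hcard, nsmul_eq_mul]
    rw [step1]
    by_cases hk : 1 ≤ k
    · simp only [if_pos hk]
      calc ∑ j ∈ Finset.range (n + 1), (n.choose j : ℝ≥0∞) * F k j
          ≤ ∑ j ∈ Finset.range (n + 1),
              (4 : ℝ≥0∞)⁻¹ ^ (2 * k - 1) * (4 : ℝ≥0∞)⁻¹ ^ j := by
            refine Finset.sum_le_sum fun j hj => ?_
            have := hkey k j (by simpa using Nat.lt_succ_iff.mp (Finset.mem_range.mp hj))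
            rwa [if_pos hk] at this
        _ = (4 : ℝ≥0∞)⁻¹ ^ (2 * k - 1) * ∑ j ∈ Finset.range (n + 1), (4 : ℝ≥0∞)⁻¹ ^ j := by
            rw [Finset.mul_sum]
        _ ≤ (4 : ℝ≥0∞)⁻¹ ^ (2 * k - 1) * ∑' j : ℕ, (4 : ℝ≥0∞)⁻¹ ^ j :=
            mul_le_mul_right (ENNReal.sum_le_tsum _) _
        _ ≤ (4 : ℝ≥0∞)⁻¹ ^ (2 * k - 1) * 2 := mul_le_mul_right geo_quarter_le_two _
        _ = 2 * (4 : ℝ≥0∞)⁻¹ ^ (2 * k - 1) := mul_comm _ _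
    · simp only [if_neg hk]
      have hzero : ∀ j ∈ Finset.range (n + 1), (n.choose j : ℝ≥0∞) * F k j = 0 := by
        intro j _
        rw [hF]
        have : ¬(1 ≤ k ∧ q ^ 2 < k * (j + q ^ 2 + 1) - 1) := by tauto
        simp only [if_neg this, mul_zero]
      rw [Finset.sum_congr rfl hzero, Finset.sum_const, smul_zero]
  -- assemble
  calc ∑' x : {x : ℕ × Finset (Fin p × Fin q) //
          1 ≤ x.1 ∧ q ^ 2 < modelDim p q x.1 x.2},
        ENNReal.ofReal (Real.exp (-(weight p q x.1.1 x.1.2)))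
      = ∑' x : ℕ × Finset (Fin p × Fin q), S.indicator f x := tsum_subtype S f
    _ = ∑' k : ℕ, ∑' J : Finset (Fin p × Fin q), S.indicator f (k, J) := ENNReal.tsum_prod'
    _ ≤ ∑' k : ℕ, (if 1 ≤ k then 2 * (4 : ℝ≥0∞)⁻¹ ^ (2 * k - 1) else 0) :=
        ENNReal.tsum_le_tsum hksum
    _ ≤ 2 := tail_bound
end

section
/- Let D > 0, n > 0 and B > 0 be real numbers. If σ > 0 satisfies the fixed-point equation σ² = √(D/n) · σ · ( B + √(log(1/min(σ,1))) ), then σ² ≤ (D/n) · ( 2B² + log( 1 / min((D/n)·B², 1) ) ). -/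
/-- If `σ > 0` solves the fixed-point equation
`σ² = √(D/n) σ (B + √(log(1/(σ ∧ 1))))`, then
`σ² ≤ (D/n)(2B² + log(1/((D/n)B² ∧ 1)))`. -/
theorem stmt_10 (D n B σ : ℝ) (hD : 0 < D) (hn : 0 < n) (hB : 0 < B) (hσ : 0 < σ)
    (heq : σ ^ 2 =
      Real.sqrt (D / n) * σ * (B + Real.sqrt (Real.log (1 / min σ 1)))) :
    σ ^ 2 ≤ D / n * (2 * B ^ 2 + Real.log (1 / min (D / n * B ^ 2) 1)) := by
  set r := Real.sqrt (D / n) with hrdef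
  have hDn : 0 < D / n := div_pos hD hn
  have hr : 0 < r := Real.sqrt_pos.mpr hDn
  have hr2 : r ^ 2 = D / n := Real.sq_sqrt hDn.le
  set L := Real.log (1 / min σ 1) with hLdef
  have hmin : 0 < min σ 1 := lt_min hσ one_pos
  have hL0 : 0 ≤ L := Real.log_nonneg (by
    rw [le_div_iff₀ hmin]
    simpa using min_le_right σ 1)
  have hsL : Real.sqrt L ^ 2 = L := Real.sq_sqrt hL0
  have hsLnn : 0 ≤ Real.sqrt L := Real.sqrt_nonneg L
  have hσeq : σ = r * (B + Real.sqrt L) := by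
    have h : σ * σ = σ * (r * (B + Real.sqrt L)) := by
      rw [← pow_two, heq]; ring
    exact mul_left_cancel₀ hσ.ne' h
  rcases le_or_gt 1 σ with h1 | h1
  · have hmσ : min σ 1 = 1 := min_eq_right h1
    have hLz : L = 0 := by rw [hLdef, hmσ]; simp
    have hσrB : σ = r * B := by rw [hσeq, hLz, Real.sqrt_zero, add_zero]
    have hsq : σ ^ 2 = D / n * B ^ 2 := by rw [hσrB, ← hr2]; ring
    have h1' : 1 ≤ D / n * B ^ 2 := by rw [← hsq]; nlinarith
    rw [min_eq_right h1']
    simp only [div_one, Real.log_one]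
    nlinarith
  · have hmσ : min σ 1 = σ := min_eq_left h1.le
    have hrBσ : r * B ≤ σ := by
      rw [hσeq]; nlinarith
    have hDnB : D / n * B ^ 2 ≤ σ ^ 2 := by rw [← hr2]; nlinarith [mul_pos hr hB]
    have hσ2lt : σ ^ 2 < 1 := by nlinarith
    have hDnBpos : 0 < D / n * B ^ 2 := by positivity
    rw [min_eq_left (le_of_lt (lt_of_le_of_lt hDnB hσ2lt))]
    have hlog : 2 * L ≤ Real.log (1 / (D / n * B ^ 2)) := by
      have hL' : L = -Real.log σ := by
        rw [hLdef, hmσ, one_div, Real.log_inv]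
      have hmono : Real.log (D / n * B ^ 2) ≤ Real.log (σ ^ 2) :=
        Real.log_le_log hDnBpos hDnB
      rw [Real.log_pow] at hmono
      rw [one_div, Real.log_inv]
      push_cast at hmono
      linarith [hmono, hL'.symm.le]
    nlinarith [sq_nonneg (B - Real.sqrt L), sq_nonneg σ]
end

section
/- Let n ≥ 1, τ > 0, and for each i ∈ {1,…,n} let s_i and t_i be probability density functions on ℝ^q with respect to the Lebesgue measure such that s_i(y) ≤ e^τ t_i(y) for almost every y. Let Y₁, …, Y_n be independent random variables on a probability space, with Y_i having density s_i, and assume log(s_i(Y_i)/t_i(Y_i)) is integrable for each i. Set KL = (1/n) Σ_{i=1}^n ∫ log(s_i(y)/t_i(y)) s_i(y) dy (assumed finite), v = (τ² / (e^{−τ} + τ − 1)) · KL / n, and c = τ/n. Then for every u > 0, P( (1/n) Σ_{i=1}^n [ log(s_i(Y_i)/t_i(Y_i)) − E(log(s_i(Y_i)/t_i(Y_i))) ] ≥ √(2 v u) + c u ) ≤ e^{−u}. -/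
open MeasureTheory ProbabilityTheory Real
open scoped ENNReal NNReal

noncomputable def psifn (x : ℝ) : ℝ := Real.exp x - x - 1

lemma psifn_nonneg (x : ℝ) : 0 ≤ psifn x := by
  have := Real.add_one_le_exp x; unfold psifn; linarith

lemma psifn_pos {x : ℝ} (hx : x ≠ 0) : 0 < psifn x := by
  have := Real.add_one_lt_exp hx; unfold psifn; linarith

/-- g(x) = (x-2)e^x + x + 2 is monotone. -/
lemma gfn_mono : Monotone (fun x : ℝ => (x - 2) * Real.exp x + x + 2) := by
  have hderiv : ∀ x : ℝ, HasDerivAt (fun x : ℝ => (x - 2) * Real.exp x + x + 2)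
      ((x - 1) * Real.exp x + 1) x := by
    intro x
    have h1 : HasDerivAt (fun x : ℝ => (x - 2) * Real.exp x)
        (1 * Real.exp x + (x - 2) * Real.exp x) x :=
      ((hasDerivAt_id x).sub_const 2).mul (Real.hasDerivAt_exp x)
    have h2 := (h1.add (hasDerivAt_id x)).add_const 2
    exact h2.congr_deriv (by ring)
  apply monotone_of_deriv_nonneg
  · intro x; exact (hderiv x).differentiableAt
  · intro x
    rw [(hderiv x).deriv]
    have h : (1 - x) * Real.exp x ≤ 1 := by
      have h1 : 1 - x ≤ Real.exp (-x) := by have := Real.add_one_le_exp (-x); linarith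
      have h2 : Real.exp (-x) * Real.exp x = 1 := by
        rw [← Real.exp_add]; simp
      nlinarith [Real.exp_pos x, Real.exp_nonneg x]
    nlinarith

lemma gfn_sign (x : ℝ) : 0 ≤ x * ((x - 2) * Real.exp x + x + 2) := by
  rcases le_or_gt 0 x with h | h
  · have := gfn_mono (show (0:ℝ) ≤ x from h)
    simp at this
    nlinarith
  · have := gfn_mono (show x ≤ (0:ℝ) from h.le)
    simp at this
    nlinarith

lemma psifn_hasDerivAt (x : ℝ) : HasDerivAt psifn (Real.exp x - 1) x := by
  have h := ((Real.hasDerivAt_exp x).sub (hasDerivAt_id x)).sub_const 1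
  exact h

/-- ψ(x) - x²/2 is monotone. -/
lemma psifn_sub_sq_mono : Monotone (fun x : ℝ => psifn x - x ^ 2 / 2) := by
  apply monotone_of_deriv_nonneg
  · intro x
    exact ((psifn_hasDerivAt x).sub ((hasDerivAt_pow 2 x).div_const 2)).differentiableAt
  · intro x
    have h : HasDerivAt (fun x : ℝ => psifn x - x ^ 2 / 2)
        (Real.exp x - 1 - 2 * x ^ 1 / 2) x :=
      (psifn_hasDerivAt x).sub ((hasDerivAt_pow 2 x).div_const 2)
    rw [h.deriv]
    have := Real.add_one_le_exp x
    simp only [pow_one]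
    linarith

lemma psifn_le_half_sq {x : ℝ} (hx : x ≤ 0) : psifn x ≤ x ^ 2 / 2 := by
  have := psifn_sub_sq_mono hx
  simp [psifn] at this ⊢
  nlinarith [this]

lemma half_sq_le_psifn {x : ℝ} (hx : 0 ≤ x) : x ^ 2 / 2 ≤ psifn x := by
  have := psifn_sub_sq_mono hx
  simp [psifn] at this ⊢
  nlinarith [this]

lemma psifn_div_sq_hasDerivAt {x : ℝ} (hx : x ≠ 0) :
    HasDerivAt (fun y : ℝ => psifn y / y ^ 2)
      (((Real.exp x - 1) * x ^ 2 - psifn x * (2 * x ^ 1)) / (x ^ 2) ^ 2) x :=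
  (psifn_hasDerivAt x).div (hasDerivAt_pow 2 x) (pow_ne_zero 2 hx)

lemma psifn_div_sq_deriv_nonneg {x : ℝ} (hx : x ≠ 0) :
    0 ≤ ((Real.exp x - 1) * x ^ 2 - psifn x * (2 * x ^ 1)) / (x ^ 2) ^ 2 := by
  apply div_nonneg _ (by positivity)
  have h := gfn_sign x
  simp only [pow_one, psifn]
  nlinarith [h]

lemma psifn_div_sq_monoOn_pos : MonotoneOn (fun y : ℝ => psifn y / y ^ 2) (Set.Ioi 0) := by
  apply monotoneOn_of_deriv_nonneg (convex_Ioi 0)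
  · intro x hx
    exact ((psifn_div_sq_hasDerivAt (ne_of_gt hx)).differentiableAt).continuousAt.continuousWithinAt
  · intro x hx
    rw [interior_Ioi] at hx
    exact (psifn_div_sq_hasDerivAt (ne_of_gt hx)).differentiableAt.differentiableWithinAt
  · intro x hx
    rw [interior_Ioi] at hx
    rw [(psifn_div_sq_hasDerivAt (ne_of_gt hx)).deriv]
    exact psifn_div_sq_deriv_nonneg (ne_of_gt hx)

lemma psifn_div_sq_monoOn_neg : MonotoneOn (fun y : ℝ => psifn y / y ^ 2) (Set.Iio 0) := by
  apply monotoneOn_of_deriv_nonneg (convex_Iio 0)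
  · intro x hx
    exact ((psifn_div_sq_hasDerivAt (ne_of_lt hx)).differentiableAt).continuousAt.continuousWithinAt
  · intro x hx
    rw [interior_Iio] at hx
    exact (psifn_div_sq_hasDerivAt (ne_of_lt hx)).differentiableAt.differentiableWithinAt
  · intro x hx
    rw [interior_Iio] at hx
    rw [(psifn_div_sq_hasDerivAt (ne_of_lt hx)).deriv]
    exact psifn_div_sq_deriv_nonneg (ne_of_lt hx)

/-- Key: ψ(x)/x² is "monotone" in the cross-multiplied form. -/
lemma psifn_key {a b : ℝ} (hab : a ≤ b) : psifn a * b ^ 2 ≤ psifn b * a ^ 2 := by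
  rcases eq_or_ne a 0 with rfl | ha
  · simp [psifn]
  rcases eq_or_ne b 0 with rfl | hb
  · simp [psifn]
  rcases lt_or_gt_of_ne ha with ha' | ha' <;> rcases lt_or_gt_of_ne hb with hb' | hb'
  · -- both negative
    have := psifn_div_sq_monoOn_neg (Set.mem_Iio.2 ha') (Set.mem_Iio.2 hb') hab
    rw [div_le_div_iff₀ (by positivity) (by positivity)] at this
    linarith
  · -- a < 0 < b
    have h1 : psifn a ≤ a ^ 2 / 2 := psifn_le_half_sq ha'.le
    have h2 : b ^ 2 / 2 ≤ psifn b := half_sq_le_psifn hb'.le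
    nlinarith [sq_nonneg a, sq_nonneg b]
  · linarith
  · -- both positive
    have := psifn_div_sq_monoOn_pos (Set.mem_Ioi.2 ha') (Set.mem_Ioi.2 hb') hab
    rw [div_le_div_iff₀ (by positivity) (by positivity)] at this
    linarith

lemma quad_hasDerivAt {x : ℝ} (hx : x < 1) :
    HasDerivAt (fun y : ℝ => y ^ 2 / (2 * (1 - y)))
      ((2 * x ^ 1 * (2 * (1 - x)) - x ^ 2 * (2 * (0 - 1))) / (2 * (1 - x)) ^ 2) x := by
  have hden : HasDerivAt (fun y : ℝ => 2 * (1 - y)) (2 * (0 - 1)) x := by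
    have := ((hasDerivAt_const x (1:ℝ)).sub (hasDerivAt_id x)).const_mul (2:ℝ)
    simpa using this
  exact (hasDerivAt_pow 2 x).div hden (by nlinarith)

lemma psifn_le_quad {x : ℝ} (hx0 : 0 ≤ x) (hx1 : x < 1) :
    psifn x ≤ x ^ 2 / (2 * (1 - x)) := by
  have key : MonotoneOn (fun y : ℝ => y ^ 2 / (2 * (1 - y)) - psifn y) (Set.Ico 0 1) := by
    apply monotoneOn_of_deriv_nonneg (convex_Ico 0 1)
    · intro y hy
      exact (((quad_hasDerivAt hy.2).sub (psifn_hasDerivAt y)).differentiableAt).continuousAt.continuousWithinAt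
    · intro y hy
      rw [interior_Ico] at hy
      exact ((quad_hasDerivAt hy.2).sub (psifn_hasDerivAt y)).differentiableAt.differentiableWithinAt
    · intro y hy
      rw [interior_Ico] at hy
      obtain ⟨hy0, hy1⟩ := hy
      rw [show deriv (fun y => y ^ 2 / (2 * (1 - y)) - psifn y) y = _ from
        ((quad_hasDerivAt hy1).sub (psifn_hasDerivAt y)).deriv]
      have he : Real.exp y * (1 - y) ≤ 1 := by
        have h1 : 1 - y ≤ Real.exp (-y) := by have := Real.add_one_le_exp (-y); linarith
        have h2 : Real.exp (-y) * Real.exp y = 1 := by rw [← Real.exp_add]; simp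
        nlinarith [Real.exp_pos y]
      have hq : Real.exp y - 1 ≤ (2 * y ^ 1 * (2 * (1 - y)) - y ^ 2 * (2 * (0 - 1))) / (2 * (1 - y)) ^ 2 := by
        rw [le_div_iff₀ (by nlinarith)]
        nlinarith [Real.exp_pos y]
      linarith
  have h0 : (0:ℝ) ∈ Set.Ico (0:ℝ) 1 := by constructor <;> norm_num
  have hx : x ∈ Set.Ico (0:ℝ) 1 := ⟨hx0, hx1⟩
  have := key h0 hx hx0
  simp [psifn] at this
  unfold psifn
  linarith

/-- Pointwise exponential inequality: for `z ≤ τ`, `θ ≥ 0`,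
`exp(θz) ≤ 1 + θz + (ψ(θτ)/ψ(−τ)) ψ(−z)`. -/
lemma exp_pointwise {τ θ z : ℝ} (hτ : 0 < τ) (hθ : 0 ≤ θ) (hz : z ≤ τ) :
    Real.exp (θ * z) ≤ 1 + θ * z + psifn (θ * τ) / psifn (-τ) * psifn (-z) := by
  have hpt : 0 < psifn (-τ) := psifn_pos (by linarith)
  have hmain : psifn (θ * z) ≤ psifn (θ * τ) / psifn (-τ) * psifn (-z) := by
    rcases eq_or_lt_of_le hθ with rfl | hθ'
    · have h1 : psifn 0 = 0 := by simp [psifn]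
      simp only [zero_mul, h1, zero_div]
      simp [psifn]
    · have k1 := psifn_key (mul_le_mul_of_nonneg_left hz hθ'.le)
      have k2 := psifn_key (neg_le_neg hz)
      have h3 : 0 ≤ psifn (θ * τ) := psifn_nonneg _
      have h4 : 0 ≤ psifn (θ * z) := psifn_nonneg _
      rw [div_mul_eq_mul_div, le_div_iff₀ hpt]
      -- k1 : psifn (θz) * (θτ)^2 ≤ psifn (θτ) * (θz)^2
      -- k2 : psifn (-τ) * (-z)^2 ≤ psifn (-z) * (-τ)^2
      have hz2 : (-z)^2 = z^2 := by ring
      have hτ2 : (-τ)^2 = τ^2 := by ring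
      rw [hz2, hτ2] at k2
      have e1 : psifn (θ * z) * (θ * τ)^2 ≤ psifn (θ * τ) * (θ * z)^2 := k1
      nlinarith [sq_nonneg z, sq_nonneg τ, mul_pos hτ hτ, sq_nonneg θ,
        mul_le_mul_of_nonneg_left k2 h3, mul_le_mul_of_nonneg_right e1 hpt.le,
        mul_pos (mul_pos hθ' hθ') (mul_pos hτ hτ)]
  have := Real.add_one_le_exp (θ * z)
  have hid : Real.exp (θ * z) = 1 + θ * z + psifn (θ * z) := by unfold psifn; ring
  linarith

lemma mean_nonneg_of_exp_neg {Ω : Type*} [MeasureSpace Ω] [IsProbabilityMeasure (ℙ : Measure Ω)]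
    {Z : Ω → ℝ} (hZint : Integrable Z ℙ)
    (hexpint : Integrable (fun ω => Real.exp (-Z ω)) ℙ)
    (hEexp : ∫ ω, Real.exp (-Z ω) ∂ℙ ≤ 1) :
    0 ≤ ∫ ω, Z ω ∂ℙ := by
  have h2 : Integrable (fun ω => Real.exp (-Z ω) + Z ω - 1) ℙ :=
    (hexpint.add hZint).sub (integrable_const 1)
  have h3 : 0 ≤ ∫ ω, (Real.exp (-Z ω) + Z ω - 1) ∂ℙ := by
    apply integral_nonneg
    intro ω
    have := Real.add_one_le_exp (-Z ω)
    simp only [Pi.zero_apply]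
    linarith
  have h4 : ∫ ω, (Real.exp (-Z ω) + Z ω - 1) ∂ℙ =
      (∫ ω, (Real.exp (-Z ω) + Z ω) ∂ℙ) - ∫ _ω, (1:ℝ) ∂ℙ :=
    integral_sub (hexpint.add hZint) (integrable_const 1)
  have h5 : ∫ ω, (Real.exp (-Z ω) + Z ω) ∂ℙ =
      (∫ ω, Real.exp (-Z ω) ∂ℙ) + ∫ ω, Z ω ∂ℙ := integral_add hexpint hZint
  simp only [integral_const, measure_univ, ENNReal.toReal_one, probReal_univ, one_smul] at h4
  rw [h4, h5] at h3
  linarith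

lemma mgf_single_bound {Ω : Type*} [MeasureSpace Ω] [IsProbabilityMeasure (ℙ : Measure Ω)]
    {Z : Ω → ℝ} (hZm : AEStronglyMeasurable Z ℙ) {τ θ : ℝ} (hτ : 0 < τ) (hθ : 0 ≤ θ)
    (hZτ : ∀ᵐ ω, Z ω ≤ τ) (hZint : Integrable Z ℙ)
    (hexpint : Integrable (fun ω => Real.exp (-Z ω)) ℙ)
    (hEexp : ∫ ω, Real.exp (-Z ω) ∂ℙ ≤ 1) :
    mgf Z ℙ θ ≤ Real.exp ((θ + psifn (θ * τ) / psifn (-τ)) * (∫ ω, Z ω ∂ℙ)) := by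
  set C := psifn (θ * τ) / psifn (-τ) with hC_def
  have hpt : 0 < psifn (-τ) := psifn_pos (by linarith)
  have hC : 0 ≤ C := div_nonneg (psifn_nonneg _) hpt.le
  set m := ∫ ω, Z ω ∂ℙ with hm_def
  have hm : 0 ≤ m := mean_nonneg_of_exp_neg hZint hexpint hEexp
  -- integrability of RHS pieces
  have h1 : Integrable (fun ω => (1:ℝ) + θ * Z ω) ℙ :=
    (integrable_const 1).add (hZint.const_mul θ)
  have h2 : Integrable (fun ω => Real.exp (-Z ω) + Z ω - 1) ℙ :=
    (hexpint.add hZint).sub (integrable_const 1)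
  have hR : Integrable (fun ω => (1 + θ * Z ω) + C * (Real.exp (-Z ω) + Z ω - 1)) ℙ :=
    h1.add (h2.const_mul C)
  -- integrability of exp (θ Z)
  have hexpθm : AEStronglyMeasurable (fun ω => Real.exp (θ * Z ω)) ℙ :=
    Real.continuous_exp.comp_aestronglyMeasurable (hZm.const_mul θ)
  have hexpθ : Integrable (fun ω => Real.exp (θ * Z ω)) ℙ := by
    apply Integrable.mono' (integrable_const (Real.exp (θ * τ))) hexpθm
    filter_upwards [hZτ] with ω hω
    rw [Real.norm_eq_abs, abs_of_pos (Real.exp_pos _)]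
    exact Real.exp_le_exp.2 (mul_le_mul_of_nonneg_left hω hθ)
  -- pointwise bound
  have hptw : ∀ᵐ ω ∂ℙ, Real.exp (θ * Z ω) ≤
      (1 + θ * Z ω) + C * (Real.exp (-Z ω) + Z ω - 1) := by
    filter_upwards [hZτ] with ω hω
    have := exp_pointwise hτ hθ hω
    have hψ : psifn (-Z ω) = Real.exp (-Z ω) + Z ω - 1 := by unfold psifn; ring
    rw [hψ] at this
    linarith
  have hmono := integral_mono_ae hexpθ hR hptw
  have e1 : ∫ ω, ((1:ℝ) + θ * Z ω) ∂ℙ = 1 + θ * m := by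
    rw [integral_add (integrable_const 1) (hZint.const_mul θ), integral_const_mul]
    simp [hm_def]
  have e2 : ∫ ω, (Real.exp (-Z ω) + Z ω - 1) ∂ℙ =
      (∫ ω, Real.exp (-Z ω) ∂ℙ) + m - 1 := by
    have h4 : ∫ ω, (Real.exp (-Z ω) + Z ω - 1) ∂ℙ =
        (∫ ω, (Real.exp (-Z ω) + Z ω) ∂ℙ) - ∫ _ω, (1:ℝ) ∂ℙ :=
      integral_sub (hexpint.add hZint) (integrable_const 1)
    have h5 : ∫ ω, (Real.exp (-Z ω) + Z ω) ∂ℙ =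
        (∫ ω, Real.exp (-Z ω) ∂ℙ) + ∫ ω, Z ω ∂ℙ := integral_add hexpint hZint
    simp only [integral_const, measure_univ, ENNReal.toReal_one, probReal_univ, one_smul] at h4
    rw [h4, h5]
  have hRval : ∫ ω, ((1 + θ * Z ω) + C * (Real.exp (-Z ω) + Z ω - 1)) ∂ℙ =
      1 + θ * m + C * ((∫ ω, Real.exp (-Z ω) ∂ℙ) + m - 1) := by
    rw [integral_add h1 (h2.const_mul C), e1, integral_const_mul, e2]
  rw [hRval] at hmono
  have hstep : 1 + θ * m + C * ((∫ ω, Real.exp (-Z ω) ∂ℙ) + m - 1) ≤ 1 + (θ + C) * m := by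
    nlinarith
  have hfinal : 1 + (θ + C) * m ≤ Real.exp ((θ + C) * m) := by
    have := Real.add_one_le_exp ((θ + C) * m)
    linarith
  rw [mgf]
  linarith

lemma density_transfer {Ω : Type*} [MeasureSpace Ω] [IsProbabilityMeasure (ℙ : Measure Ω)]
    {q : ℕ} {s : (Fin q → ℝ) → ℝ} (hs_meas : Measurable s) (hs_nonneg : ∀ y, 0 ≤ s y)
    {Y : Ω → (Fin q → ℝ)} (hY_meas : Measurable Y)
    (hY_law : Measure.map Y ℙ = volume.withDensity (fun y => ENNReal.ofReal (s y)))
    (g : (Fin q → ℝ) → ℝ) (hg : Measurable g) :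
    (∫ ω, g (Y ω) ∂ℙ = ∫ y, s y * g y) ∧
      (Integrable (fun y => s y * g y) volume → Integrable (fun ω => g (Y ω)) ℙ) := by
  have hsnn : Measurable (fun y => (s y).toNNReal) := hs_meas.real_toNNReal
  have hdens : (fun y : Fin q → ℝ => ENNReal.ofReal (s y)) =
      (fun y => ((fun y => (s y).toNNReal) y : ℝ≥0∞)) := rfl
  have hlaw : Measure.map Y ℙ =
      volume.withDensity (fun y => ((fun y => (s y).toNNReal) y : ℝ≥0∞)) := by
    rw [hY_law, hdens]
  have hsmul : ∀ y, (s y).toNNReal • g y = s y * g y := by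
    intro y
    rw [NNReal.smul_def, smul_eq_mul, Real.coe_toNNReal _ (hs_nonneg y)]
  constructor
  · have h1 : ∫ ω, g (Y ω) ∂ℙ = ∫ y, g y ∂(Measure.map Y ℙ) := by
      rw [integral_map hY_meas.aemeasurable hg.aestronglyMeasurable]
    rw [h1, hlaw, integral_withDensity_eq_integral_smul hsnn]
    exact integral_congr_ae (Filter.EventuallyEq.of_eq (funext fun y => hsmul y))
  · intro hint
    have h2 : Integrable g (Measure.map Y ℙ) := by
      rw [hlaw, integrable_withDensity_iff_integrable_smul hsnn]
      apply hint.congr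
      exact Filter.EventuallyEq.of_eq (funext fun y => (hsmul y).symm)
    exact (integrable_map_measure hg.aestronglyMeasurable hY_meas.aemeasurable).1 h2

lemma per_index {Ω : Type*} [MeasureSpace Ω] [IsProbabilityMeasure (ℙ : Measure Ω)] {q : ℕ}
    {s t : (Fin q → ℝ) → ℝ} (hs_meas : Measurable s) (ht_meas : Measurable t)
    (hs_nonneg : ∀ y, 0 ≤ s y) (ht_nonneg : ∀ y, 0 ≤ t y) (ht_one : (∫ y, t y) = 1)
    {τ : ℝ} (hτ : 0 < τ) (hbound : ∀ᵐ y : Fin q → ℝ, s y ≤ Real.exp τ * t y)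
    {Y : Ω → (Fin q → ℝ)} (hY_meas : Measurable Y)
    (hY_law : Measure.map Y ℙ = volume.withDensity (fun y => ENNReal.ofReal (s y)))
    (hint : Integrable (fun ω => Real.log (s (Y ω) / t (Y ω))) ℙ) (θ : ℝ) (hθ : 0 ≤ θ) :
    (0 ≤ ∫ ω, Real.log (s (Y ω) / t (Y ω)) ∂ℙ) ∧
    ((∫ ω, Real.log (s (Y ω) / t (Y ω)) ∂ℙ) = ∫ y, Real.log (s y / t y) * s y) ∧
    mgf (fun ω => Real.log (s (Y ω) / t (Y ω))) ℙ θ ≤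
      Real.exp ((θ + psifn (θ * τ) / psifn (-τ)) * ∫ ω, Real.log (s (Y ω) / t (Y ω)) ∂ℙ) ∧
    (∀ᵐ ω ∂ℙ, Real.log (s (Y ω) / t (Y ω)) ≤ τ) := by
  set Z : Ω → ℝ := fun ω => Real.log (s (Y ω) / t (Y ω)) with hZ_def
  have hZmeas : Measurable Z :=
    ((hs_meas.comp hY_meas).div (ht_meas.comp hY_meas)).log
  -- a.e. positivity under the law
  have hae : ∀ᵐ ω ∂ℙ, 0 < s (Y ω) ∧ s (Y ω) ≤ Real.exp τ * t (Y ω) := by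
    have hmap : ∀ᵐ y ∂(Measure.map Y ℙ), 0 < s y ∧ s y ≤ Real.exp τ * t y := by
      rw [hY_law, ae_withDensity_iff hs_meas.ennreal_ofReal]
      filter_upwards [hbound] with y hy hne
      refine ⟨?_, hy⟩
      rcases lt_or_eq_of_le (hs_nonneg y) with h | h
      · exact h
      · exfalso; apply hne; rw [← h]; simp
    exact ae_of_ae_map hY_meas.aemeasurable hmap
  have hZτ : ∀ᵐ ω ∂ℙ, Z ω ≤ τ := by
    filter_upwards [hae] with ω ⟨h1, h2⟩
    have ht_pos : 0 < t (Y ω) := by nlinarith [Real.exp_pos τ]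
    have hdiv : s (Y ω) / t (Y ω) ≤ Real.exp τ := by
      rw [div_le_iff₀ ht_pos]; linarith
    have := Real.log_le_log (div_pos h1 ht_pos) hdiv
    rwa [Real.log_exp] at this
  have hexp_eq : ∀ᵐ ω ∂ℙ, Real.exp (-Z ω) = t (Y ω) / s (Y ω) := by
    filter_upwards [hae] with ω ⟨h1, h2⟩
    have ht_pos : 0 < t (Y ω) := by nlinarith [Real.exp_pos τ]
    rw [hZ_def]
    simp only []
    rw [Real.exp_neg, Real.exp_log (div_pos h1 ht_pos), inv_div]
  -- integrability of t
  have ht_int : Integrable t (volume : Measure (Fin q → ℝ)) := by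
    by_contra h
    rw [integral_undef h] at ht_one
    norm_num at ht_one
  -- s * (t/s) facts
  have hst_ptwise : ∀ y, 0 ≤ s y * (t y / s y) ∧ s y * (t y / s y) ≤ t y := by
    intro y
    rcases eq_or_ne (s y) 0 with h | h
    · rw [h]; simp [ht_nonneg y]
    · rw [mul_comm, div_mul_cancel₀ _ h]
      exact ⟨ht_nonneg y, le_refl _⟩
  have hst_int : Integrable (fun y => s y * (t y / s y)) (volume : Measure (Fin q → ℝ)) := by
    apply Integrable.mono' ht_int
    · exact ((hs_meas.mul (ht_meas.div hs_meas))).aestronglyMeasurable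
    · filter_upwards with y
      rw [Real.norm_eq_abs, abs_of_nonneg (hst_ptwise y).1]
      exact (hst_ptwise y).2
  obtain ⟨hg0_val, hg0_int⟩ := density_transfer hs_meas hs_nonneg hY_meas hY_law
    (fun y => t y / s y) (ht_meas.div hs_meas)
  have hcompint : Integrable (fun ω => t (Y ω) / s (Y ω)) ℙ := hg0_int hst_int
  have hexpint : Integrable (fun ω => Real.exp (-Z ω)) ℙ := by
    apply hcompint.congr
    filter_upwards [hexp_eq] with ω h
    exact h.symm
  have hEexp : (∫ ω, Real.exp (-Z ω) ∂ℙ) ≤ 1 := by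
    rw [integral_congr_ae (g := fun ω => t (Y ω) / s (Y ω)) hexp_eq, hg0_val]
    calc (∫ y, s y * (t y / s y)) ≤ ∫ y, t y :=
          integral_mono hst_int ht_int (fun y => (hst_ptwise y).2)
      _ = 1 := ht_one
  have hm0 : 0 ≤ ∫ ω, Z ω ∂ℙ := mean_nonneg_of_exp_neg hint hexpint hEexp
  obtain ⟨hg1_val, _⟩ := density_transfer hs_meas hs_nonneg hY_meas hY_law
    (fun y => Real.log (s y / t y)) ((hs_meas.div ht_meas).log)
  have hmval : (∫ ω, Z ω ∂ℙ) = ∫ y, Real.log (s y / t y) * s y := by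
    rw [hZ_def]
    simp only []
    rw [hg1_val]
    congr 1
    funext y
    ring
  exact ⟨hm0, hmval,
    mgf_single_bound hZmeas.aestronglyMeasurable hτ hθ hZτ hint hexpint hEexp, hZτ⟩

lemma key_algebra (r P V u τ : ℝ) (hP : P = 1 + τ*r) (hPpos : 0 < P)
    (hr2V : r^2 * V = 2*u) :
    -(r/P)*(V*r+τ*u) + (r/P)^2 * V / (2*(1 - (r/P)*τ)) = -u := by
  have hPne : P ≠ 0 := hPpos.ne'
  have h1 : 1 - (r/P)*τ = 1/P := by
    have : (r/P)*τ = r*τ/P := by ring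
    rw [this, eq_div_iff hPne, sub_mul, div_mul_cancel₀ _ hPne, hP]
    ring
  rw [h1]
  field_simp
  linear_combination (-1) * hr2V + (2*u) * hP

/-- Bernstein-type deviation bound for the recentred empirical process of the
log-likelihood ratios `log(sᵢ(Yᵢ)/tᵢ(Yᵢ))`, where `Yᵢ` are independent with
densities `sᵢ` and `sᵢ ≤ e^τ tᵢ` a.e.:
`P(νₙ(kl) ≥ √(2vu) + cu) ≤ e^{−u}` with `v = (τ²/(e^{−τ}+τ−1)) KL/n`, `c = τ/n`. -/
theorem stmt_12 {Ω : Type*} [MeasureSpace Ω] [IsProbabilityMeasure (ℙ : Measure Ω)]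
    (q n : ℕ) (hn : 1 ≤ n) (τ : ℝ) (hτ : 0 < τ)
    (s t : Fin n → (Fin q → ℝ) → ℝ)
    (hs_meas : ∀ i, Measurable (s i)) (ht_meas : ∀ i, Measurable (t i))
    (hs_nonneg : ∀ i y, 0 ≤ s i y) (ht_nonneg : ∀ i y, 0 ≤ t i y)
    (hs_one : ∀ i, ∫ y, s i y = 1) (ht_one : ∀ i, ∫ y, t i y = 1)
    (hbound : ∀ i, ∀ᵐ y : Fin q → ℝ, s i y ≤ Real.exp τ * t i y)
    (Y : Fin n → Ω → (Fin q → ℝ)) (hY_meas : ∀ i, Measurable (Y i))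
    (hY_indep : iIndepFun Y ℙ)
    (hY_law : ∀ i, Measure.map (Y i) ℙ =
      volume.withDensity (fun y => ENNReal.ofReal (s i y)))
    (hint : ∀ i, Integrable (fun ω => Real.log (s i (Y i ω) / t i (Y i ω))) ℙ)
    (KL v c : ℝ)
    (hKL : KL = (1 / n : ℝ) * ∑ i, ∫ y, Real.log (s i y / t i y) * s i y)
    (hv : v = τ ^ 2 / (Real.exp (-τ) + τ - 1) * KL / n)
    (hc : c = τ / n)
    (u : ℝ) (hu : 0 < u) :
    ℙ {ω | Real.sqrt (2 * v * u) + c * u ≤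
        (1 / n : ℝ) * ∑ i, (Real.log (s i (Y i ω) / t i (Y i ω)) -
          ∫ ω', Real.log (s i (Y i ω') / t i (Y i ω')) ∂ℙ)} ≤
      ENNReal.ofReal (Real.exp (-u)) := by
  have hn' : (0:ℝ) < n := by exact_mod_cast Nat.lt_of_lt_of_le Nat.zero_lt_one hn
  have hψτ : Real.exp (-τ) + τ - 1 = psifn (-τ) := by unfold psifn; ring
  have hψτpos : 0 < psifn (-τ) := psifn_pos (by linarith)
  set Z : Fin n → Ω → ℝ := fun i ω => Real.log (s i (Y i ω) / t i (Y i ω)) with hZdef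
  have hZmeas : ∀ i, Measurable (Z i) := fun i =>
    (((hs_meas i).comp (hY_meas i)).div ((ht_meas i).comp (hY_meas i))).log
  set m : Fin n → ℝ := fun i => ∫ ω, Z i ω ∂ℙ with hmdef
  set M : ℝ := ∑ i, m i with hMdef
  have hfacts : ∀ (i : Fin n) (θ : ℝ), 0 ≤ θ →
      (0 ≤ m i) ∧ (m i = ∫ y, Real.log (s i y / t i y) * s i y) ∧
      mgf (Z i) ℙ θ ≤ Real.exp ((θ + psifn (θ * τ) / psifn (-τ)) * m i) ∧
      (∀ᵐ ω ∂ℙ, Z i ω ≤ τ) := fun i θ hθ =>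
    per_index (hs_meas i) (ht_meas i) (hs_nonneg i) (ht_nonneg i) (ht_one i) hτ
      (hbound i) (hY_meas i) (hY_law i) (hint i) θ hθ
  have hm0 : ∀ i, 0 ≤ m i := fun i => (hfacts i 0 le_rfl).1
  have hM0 : 0 ≤ M := Finset.sum_nonneg fun i _ => hm0 i
  have hMKL : M = n * KL := by
    rw [hKL, hMdef]
    rw [Finset.mul_sum, Finset.mul_sum]
    apply Finset.sum_congr rfl
    intro i _
    rw [(hfacts i 0 le_rfl).2.1]
    field_simp
  have hKL0 : 0 ≤ KL := by
    have h : 0 ≤ (n:ℝ) * KL := hMKL ▸ hM0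
    nlinarith
  set a' : ℝ := Real.sqrt (2 * v * u) + c * u with ha'def
  -- rewrite the event
  have hset : {ω | Real.sqrt (2 * v * u) + c * u ≤
        (1 / n : ℝ) * ∑ i, (Z i ω - m i)} =
      {ω | n * a' + M ≤ (∑ i, Z i) ω} := by
    ext ω
    simp only [Set.mem_setOf_eq, Finset.sum_apply]
    rw [Finset.sum_sub_distrib]
    rw [show (1 / (n:ℝ)) * ((∑ i, Z i ω) - M) = ((∑ i, Z i ω) - M) / n by ring,
      le_div_iff₀ hn', ha'def]
    constructor <;> intro h <;> nlinarith
  rw [show {ω | Real.sqrt (2 * v * u) + c * u ≤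
        (1 / n : ℝ) * ∑ i, (Z i ω - ∫ ω', Z i ω' ∂ℙ)} =
      {ω | n * a' + M ≤ (∑ i, Z i) ω} from hset]
  -- generic Chernoff bound
  have hZτ : ∀ i, ∀ᵐ ω ∂ℙ, Z i ω ≤ τ := fun i => (hfacts i 0 le_rfl).2.2.2
  have claim : ∀ θ : ℝ, 0 ≤ θ →
      (ℙ {ω | n * a' + M ≤ (∑ i, Z i) ω}).toReal ≤
        Real.exp (-θ * (n * a' + M) + (θ + psifn (θ * τ) / psifn (-τ)) * M) := by
    intro θ hθ
    have hsum_le : ∀ᵐ ω ∂ℙ, (∑ i, Z i) ω ≤ n * τ := by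
      have := ae_all_iff.2 hZτ
      filter_upwards [this] with ω hω
      rw [Finset.sum_apply]
      calc ∑ i, Z i ω ≤ ∑ _i : Fin n, τ := Finset.sum_le_sum fun i _ => hω i
        _ = n * τ := by rw [Finset.sum_const, Finset.card_univ, Fintype.card_fin,
              nsmul_eq_mul]
    have hint_exp : Integrable (fun ω => Real.exp (θ * (∑ i, Z i) ω)) ℙ := by
      apply Integrable.mono' (integrable_const (Real.exp (θ * (n * τ))))
      · have hXmeas : Measurable (∑ i, Z i) := by
          have h : (∑ i, Z i) = fun ω => ∑ i, Z i ω := by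
            funext ω; simp [Finset.sum_apply]
          rw [h]
          exact Finset.measurable_sum Finset.univ fun i _ => hZmeas i
        exact (Real.continuous_exp.comp_aestronglyMeasurable
          ((hXmeas.const_mul θ).aestronglyMeasurable))
      · filter_upwards [hsum_le] with ω hω
        rw [Real.norm_eq_abs, abs_of_pos (Real.exp_pos _)]
        exact Real.exp_le_exp.2 (mul_le_mul_of_nonneg_left hω hθ)
    have hchern := measure_ge_le_exp_mul_mgf (X := ∑ i, Z i) (μ := ℙ)
      (n * a' + M) hθ hint_exp
    have hZindep : iIndepFun Z ℙ :=
      hY_indep.comp (fun i y => Real.log (s i y / t i y))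
        (fun i => ((hs_meas i).div (ht_meas i)).log)
    have hmgf : mgf (∑ i, Z i) ℙ θ = ∏ i, mgf (Z i) ℙ θ :=
      hZindep.mgf_sum hZmeas Finset.univ
    have hprod : (∏ i, mgf (Z i) ℙ θ) ≤
        Real.exp ((θ + psifn (θ * τ) / psifn (-τ)) * M) := by
      calc (∏ i, mgf (Z i) ℙ θ)
          ≤ ∏ i, Real.exp ((θ + psifn (θ * τ) / psifn (-τ)) * m i) :=
            Finset.prod_le_prod (fun i _ => mgf_nonneg) (fun i _ => (hfacts i θ hθ).2.2.1)
        _ = Real.exp (∑ i, (θ + psifn (θ * τ) / psifn (-τ)) * m i) :=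
            (Real.exp_sum _ _).symm
        _ = Real.exp ((θ + psifn (θ * τ) / psifn (-τ)) * M) := by
            rw [← Finset.mul_sum]
    calc (ℙ {ω | n * a' + M ≤ (∑ i, Z i) ω}).toReal
        ≤ Real.exp (-θ * (n * a' + M)) * mgf (∑ i, Z i) ℙ θ := hchern
      _ ≤ Real.exp (-θ * (n * a' + M)) *
            Real.exp ((θ + psifn (θ * τ) / psifn (-τ)) * M) := by
          apply mul_le_mul_of_nonneg_left _ (Real.exp_pos _).le
          rw [hmgf]; exact hprod
      _ = Real.exp (-θ * (n * a' + M) + (θ + psifn (θ * τ) / psifn (-τ)) * M) := by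
          rw [← Real.exp_add]
  -- now choose θ
  have hfinal : (ℙ {ω | n * a' + M ≤ (∑ i, Z i) ω}).toReal ≤ Real.exp (-u) := by
    rcases eq_or_lt_of_le hKL0 with hKL_eq | hKL_pos
    · -- KL = 0 : take θ = 1/τ
      have hM : M = 0 := by rw [hMKL, ← hKL_eq, mul_zero]
      have hv0 : v = 0 := by rw [hv, ← hKL_eq]; ring
      have hθ0 : (0:ℝ) ≤ 1/τ := by positivity
      refine (claim (1/τ) hθ0).trans (le_of_eq ?_)
      congr 1
      rw [hM, ha'def, hv0, hc]
      have h0 : Real.sqrt (2 * 0 * u) = 0 := by norm_num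
      rw [h0]
      field_simp
      ring
    · -- KL > 0
      set V : ℝ := (n:ℝ)^2 * v with hVdef
      have hvpos : 0 < v := by
        rw [hv, hψτ]
        exact div_pos (mul_pos (div_pos (pow_pos hτ 2) hψτpos) hKL_pos) hn'
      have hVpos : 0 < V := mul_pos (pow_pos hn' 2) hvpos
      have hVM : V * psifn (-τ) = M * τ^2 := by
        rw [hVdef, hv, hψτ, hMKL]
        field_simp
      set r : ℝ := Real.sqrt (2*u/V) with hrdef
      have hrpos : 0 < r := Real.sqrt_pos.2 (by positivity)
      have hr2 : r^2 = 2*u/V := Real.sq_sqrt (by positivity)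
      have hr2V : r^2 * V = 2*u := by rw [hr2]; field_simp
      set P : ℝ := 1 + τ*r with hPdef
      have hPpos : 0 < P := by nlinarith [mul_pos hτ hrpos]
      set θ : ℝ := r / P with hθdef
      have hθ0 : 0 ≤ θ := (div_pos hrpos hPpos).le
      have h1θτ : 1 - θ*τ = 1/P := by
        rw [hθdef]
        field_simp
        ring
      have hx0 : 0 ≤ θ*τ := mul_nonneg hθ0 hτ.le
      have hx1 : θ*τ < 1 := by
        have : (0:ℝ) < 1/P := by positivity
        linarith
      have hquad := psifn_le_quad hx0 hx1
      have hDpos : 0 < 2*(1-θ*τ) := by linarith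
      have hquad' : psifn (θ*τ) * (2*(1-θ*τ)) ≤ (θ*τ)^2 := by
        rw [le_div_iff₀ hDpos] at hquad
        exact hquad
      have hCM : psifn (θ*τ)/psifn (-τ) * M ≤ θ^2 * V / (2*(1-θ*τ)) := by
        rw [div_mul_eq_mul_div, div_le_div_iff₀ hψτpos hDpos]
        have h1 : psifn (θ*τ) * (2*(1-θ*τ)) * M ≤ (θ*τ)^2 * M :=
          mul_le_mul_of_nonneg_right hquad' hM0
        calc psifn (θ*τ) * M * (2*(1-θ*τ)) = psifn (θ*τ) * (2*(1-θ*τ)) * M := by ring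
          _ ≤ (θ*τ)^2 * M := h1
          _ = θ^2 * (M * τ^2) := by ring
          _ = θ^2 * (V * psifn (-τ)) := by rw [hVM]
          _ = θ^2 * V * psifn (-τ) := by ring
      have hsq1 : (n:ℝ) * Real.sqrt (2*v*u) = Real.sqrt (2*u*V) := by
        rw [show (2*u*V) = (n:ℝ)^2*(2*v*u) by rw [hVdef]; ring,
          Real.sqrt_mul (sq_nonneg _), Real.sqrt_sq hn'.le]
      have hVr : V * r = Real.sqrt (2*u*V) := by
        have hsqr : (V*r)^2 = 2*u*V := by
          rw [mul_pow]
          calc V^2 * r^2 = r^2 * V * V := by ring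
            _ = 2*u*V := by rw [hr2V]
        rw [← Real.sqrt_sq (mul_nonneg hVpos.le hrpos.le), hsqr]
      have hna' : (n:ℝ) * a' = V*r + τ*u := by
        rw [ha'def, hc, mul_add, hsq1, hVr]
        field_simp
      refine (claim θ hθ0).trans ?_
      apply Real.exp_le_exp.2
      have hkey : -θ*(V*r+τ*u) + θ^2 * V / (2*(1-θ*τ)) = -u := by
        rw [hθdef]
        exact key_algebra r P V u τ hPdef hPpos hr2V
      calc -θ * (↑n * a' + M) + (θ + psifn (θ*τ)/psifn (-τ)) * M
          = -θ * (↑n * a') + psifn (θ*τ)/psifn (-τ) * M := by ring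
        _ ≤ -θ * (V*r+τ*u) + θ^2 * V / (2*(1-θ*τ)) := by
            rw [hna']
            linarith [hCM]
        _ = -u := hkey
  calc ℙ {ω | n * a' + M ≤ (∑ i, Z i) ω}
      = ENNReal.ofReal ((ℙ {ω | n * a' + M ≤ (∑ i, Z i) ω}).toReal) :=
        (ENNReal.ofReal_toReal (measure_ne_top _ _)).symm
    _ ≤ ENNReal.ofReal (Real.exp (-u)) := ENNReal.ofReal_le_ofReal hfinal
end
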